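/- arXiv:2212.01826 — 4 statements merged into one kernel-verified Lean document; each statement's English description precedes it below -/
import Mathlib

section
/- Let A be an associative unital algebra over a commutative ring R, and let J be a left ideal of A generated by finitely many pairwise commuting idempotents. Then J is a projective left A-module. -/
section Aux

variable {A : Type*} [Ring A]

/-- For a list of pairwise commuting idempotents, the product `∏ (1 - x)` is
idempotent, kills each element, and its complement lies in the span. -/
lemma prod_one_sub_spec (l : List A) (hid : ∀ x ∈ l, x * x = x)
    (hc : l.Pairwise Commute) :
    (l.map (fun x => 1 - x)).prod * (l.map (fun x => 1 - x)).prod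
        = (l.map (fun x => 1 - x)).prod ∧
    (∀ x ∈ l, x * (l.map (fun x => 1 - x)).prod = 0) ∧
    1 - (l.map (fun x => 1 - x)).prod ∈ Ideal.span {x | x ∈ l} := by
  induction l with
  | nil =>
      simp
  | cons a t ih =>
      obtain ⟨hPP, hkill, hmem⟩ := ih (fun x hx => hid x (List.mem_cons_of_mem a hx))
        (List.Pairwise.of_cons hc)
      set P : A := (t.map (fun x => 1 - x)).prod with hP
      have hcomm_a : ∀ x ∈ t, Commute a x := fun x hx => List.rel_of_pairwise_cons hc hx
      have haP : Commute a P := by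
        apply Commute.list_prod_right
        intro y hy
        simp only [List.mem_map] at hy
        obtain ⟨x, hx, rfl⟩ := hy
        exact (Commute.one_right a).sub_right (hcomm_a x hx)
      have haa : a * a = a := hid a (List.mem_cons_self)
      constructor
      · -- idempotency of (1-a)*P
        simp only [List.map_cons, List.prod_cons]
        have h1a : Commute (1 - a) P := (Commute.one_left P).sub_left haP
        have h1 : P * ((1 - a) * P) = (1 - a) * (P * P) := by
          rw [← mul_assoc, ← h1a.eq, mul_assoc]
        calc (1 - a) * P * ((1 - a) * P) = (1 - a) * ((1 - a) * (P * P)) := by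
              rw [mul_assoc, h1]
          _ = ((1 - a) * (1 - a)) * P := by rw [hPP, mul_assoc]
          _ = (1 - a) * P := by
              congr 1
              have h2 : (1 - a) * (1 - a) = 1 - a - a + a * a := by noncomm_ring
              rw [h2, haa]; abel
      constructor
      · intro x hx
        simp only [List.map_cons, List.prod_cons]
        rcases List.mem_cons.1 hx with rfl | hx
        · rw [← mul_assoc]
          have : x * (1 - x) = 0 := by rw [mul_sub, mul_one, hid x hx, sub_self]
          rw [this, zero_mul]
        · have hcx : Commute x (1 - a) :=
            (Commute.one_right x).sub_right (hcomm_a x hx).symm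
          rw [← mul_assoc, hcx.eq, mul_assoc, hkill x hx, mul_zero]
      · simp only [List.map_cons, List.prod_cons]
        have key : 1 - (1 - a) * P = (1 - P) + P * a := by
          rw [← haP.eq]; noncomm_ring
        rw [key]
        apply Ideal.add_mem
        · exact Ideal.span_mono (fun x hx => List.mem_cons_of_mem a hx) hmem
        · exact Ideal.mul_mem_left _ P (Ideal.subset_span (List.mem_cons_self))

end Aux

/-- Let `A` be an associative unital algebra over a commutative ring `R`, and let
`J` be a left ideal of `A` generated by finitely many pairwise commuting
idempotents. Then `J` is a projective left `A`-module. -/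
theorem span_commuting_idempotents_projective (R A : Type*) [CommRing R] [Ring A]
    [Algebra R A] (k : ℕ) (e : Fin k → A)
    (hid : ∀ i, e i * e i = e i)
    (hcomm : ∀ i j, e i * e j = e j * e i) :
    Module.Projective A (Ideal.span (Set.range e) : Ideal A) := by
  set l : List A := List.ofFn e with hl
  have hmem_l : ∀ x, x ∈ l ↔ ∃ i, e i = x := by
    intro x; simp [hl, List.mem_ofFn, Set.mem_range]
  obtain ⟨hPP, hkill, hmem⟩ := prod_one_sub_spec l
    (by intro x hx; obtain ⟨i, rfl⟩ := (hmem_l x).1 hx; exact hid i)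
    (by
      rw [hl, List.pairwise_ofFn]
      intro i j _
      exact hcomm i j)
  set P : A := (l.map (fun x => 1 - x)).prod with hP
  set f : A := 1 - P with hf
  have hrange : {x | x ∈ l} = Set.range e := by
    ext x; simp [hmem_l x, Set.mem_range]
  have hff : f * f = f := by
    have h2 : (1 - P) * (1 - P) = 1 - P - P + P * P := by noncomm_ring
    rw [hf, h2, hPP]; abel
  have hef : ∀ i, e i * f = e i := by
    intro i
    rw [hf, mul_sub, mul_one, hkill (e i) ((hmem_l (e i)).2 ⟨i, rfl⟩), sub_zero]
  have hspan : Ideal.span (Set.range e) = Ideal.span {f} := by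
    apply le_antisymm
    · rw [Ideal.span_le]
      rintro x ⟨i, rfl⟩
      rw [← hef i]
      exact Ideal.mul_mem_left _ _ (Ideal.subset_span rfl)
    · rw [Ideal.span_le, Set.singleton_subset_iff]
      rw [← hrange]
      exact hmem
  rw [hspan]
  -- span {f} is a direct summand of A
  have hxf : ∀ x ∈ Ideal.span ({f} : Set A), x * f = x := by
    intro x hx
    obtain ⟨a, rfl⟩ := Ideal.mem_span_singleton'.1 hx
    rw [mul_assoc, hff]
  let π : A →ₗ[A] (Ideal.span ({f} : Set A)) :=
    { toFun := fun a => ⟨a * f, Ideal.mem_span_singleton'.2 ⟨a, rfl⟩⟩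
      map_add' := by intro a b; ext; simp [add_mul]
      map_smul' := by intro c a; ext; simp [mul_assoc, smul_eq_mul] }
  refine Module.Projective.of_split (Ideal.span ({f} : Set A)).subtype π ?_
  ext x
  simpa [π] using hxf x x.2
end

section
/- Let A be a subalgebra of the rook-Brauer algebra RBr_n(δ, ε) that is free as an R-module on a subset of the rook-Brauer diagrams and contains at least one diagram with the maximum number n of left-to-right connections. Let A_max be the R-span of the diagrams in A with exactly n left-to-right connections, and let I_{n−1} be the two-sided ideal of RBr_n spanned by diagrams with fewer than n left-to-right connections. Then A_max is a subalgebra of A isomorphic to the group ring RG for some subgroup G ≤ Σ_n, and the composite A_max → A → A/(A ∩ I_{n−1}) is an algebra isomorphism, exhibiting A_max as a retract of A. -/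
open MulOpposite

/-- A rook-Brauer `n`-diagram: two columns of `n` nodes (left = `Sum.inl`,
right = `Sum.inr`), where each node is connected to at most one other node. -/
structure Diagram (n : ℕ) : Type where
  pair : Fin n ⊕ Fin n → Option (Fin n ⊕ Fin n)
  symm : ∀ u v, pair u = some v → pair v = some u
  irrefl : ∀ u, pair u ≠ some u

namespace Diagram

variable {n : ℕ}

/-- Nodes of the concatenation of two diagrams: left, middle and right column. -/
abbrev CNode (n : ℕ) : Type := Fin n ⊕ (Fin n ⊕ Fin n)

/-- Embedding of the nodes of the first diagram into the concatenation. -/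
def eLM : Fin n ⊕ Fin n → CNode n :=
  Sum.elim Sum.inl (fun a => Sum.inr (Sum.inl a))

/-- Embedding of the nodes of the second diagram into the concatenation. -/
def eMR : Fin n ⊕ Fin n → CNode n :=
  Sum.elim (fun a => Sum.inr (Sum.inl a)) (fun a => Sum.inr (Sum.inr a))

/-- Embedding of the boundary (outer) nodes into the concatenation. -/
def eB : Fin n ⊕ Fin n → CNode n :=
  Sum.elim Sum.inl (fun a => Sum.inr (Sum.inr a))

/-- A middle node of the concatenation. -/
def mid (a : Fin n) : CNode n := Sum.inr (Sum.inl a)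

/-- The edges of the concatenation of the diagrams `x` and `y`. -/
def cEdge (x y : Diagram n) : CNode n → CNode n → Prop := fun u v =>
  (∃ p q, x.pair p = some q ∧ eLM p = u ∧ eLM q = v) ∨
  (∃ p q, y.pair p = some q ∧ eMR p = u ∧ eMR q = v)

/-- Connectivity in the concatenation of the diagrams `x` and `y`. -/
def cConn (x y : Diagram n) : CNode n → CNode n → Prop :=
  Relation.EqvGen (cEdge x y)

/-- `ConcatEq x y z` says that `z` is the underlying diagram of the product
`x · y`: two boundary nodes are joined in `z` exactly when they are distinct
and connected through the concatenation of `x` and `y`. -/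
def ConcatEq (x y z : Diagram n) : Prop :=
  ∀ u v, z.pair u = some v ↔ (u ≠ v ∧ cConn x y (eB u) (eB v))

/-- A middle node not connected to any boundary node. -/
def midIsolated (x y : Diagram n) (a : Fin n) : Prop :=
  ∀ u : Fin n ⊕ Fin n, ¬ cConn x y (eB u) (mid a)

/-- The middle node `a` has valence two in the concatenation. -/
def degTwo (x y : Diagram n) (a : Fin n) : Prop :=
  (∃ p, x.pair (Sum.inr a) = some p) ∧ (∃ q, y.pair (Sum.inl a) = some q)

/-- A middle node lying on a loop of the concatenation. -/
def isLoopNode (x y : Diagram n) (a : Fin n) : Prop :=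
  midIsolated x y a ∧ ∀ b : Fin n, cConn x y (mid a) (mid b) → degTwo x y b

/-- A middle node lying on a contractible isolated component of the concatenation. -/
def isFreeNode (x y : Diagram n) (a : Fin n) : Prop :=
  midIsolated x y a ∧ ¬ (∀ b : Fin n, cConn x y (mid a) (mid b) → degTwo x y b)

/-- The number of loops formed in the middle when concatenating `x` and `y`. -/
noncomputable def loopCount (x y : Diagram n) : ℕ :=
  Nat.card (Quot (fun a b : {a : Fin n // isLoopNode x y a} =>
    cConn x y (mid a.1) (mid b.1)))

/-- The number of contractible isolated components formed in the middle when
concatenating `x` and `y`. -/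
noncomputable def freeCount (x y : Diagram n) : ℕ :=
  Nat.card (Quot (fun a b : {a : Fin n // isFreeNode x y a} =>
    cConn x y (mid a.1) (mid b.1)))

/-- The number of left-to-right connections of a diagram. -/
noncomputable def lrCount (d : Diagram n) : ℕ :=
  Nat.card {p : Fin n × Fin n // d.pair (Sum.inl p.1) = some (Sum.inr p.2)}

/-- The identity diagram. -/
def idDiagram (n : ℕ) : Diagram n where
  pair := Sum.elim (fun a => some (Sum.inr a)) (fun a => some (Sum.inl a))
  symm := by rintro (a | a) (b | b) h <;> simp_all
  irrefl := by rintro (a | a) h <;> simp_all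

/-- A rook diagram: no left-to-left or right-to-right connections. -/
def IsRook (d : Diagram n) : Prop :=
  ∀ a b : Fin n,
    d.pair (Sum.inl a) ≠ some (Sum.inl b) ∧ d.pair (Sum.inr a) ≠ some (Sum.inr b)

/-- A Brauer diagram: no missing edges. -/
def IsBrauer (d : Diagram n) : Prop := ∀ u, (d.pair u).isSome

/-- Position of a node on the boundary circle (left column top to bottom,
then right column bottom to top). -/
def circPos (n : ℕ) : Fin n ⊕ Fin n → ℕ :=
  Sum.elim (fun a => (a : ℕ)) (fun a => 2 * n - 1 - (a : ℕ))

/-- A planar diagram: no two edges cross. -/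
def IsPlanar (d : Diagram n) : Prop :=
  ¬ ∃ u v w t, d.pair u = some v ∧ d.pair w = some t ∧
      circPos n u < circPos n w ∧ circPos n w < circPos n v ∧ circPos n v < circPos n t

/-- A permutation diagram: every node on either side is connected to a node
on the other side (no missing edges and no left-to-left or right-to-right
connections). -/
def IsPerm (d : Diagram n) : Prop :=
  ∀ a : Fin n, (∃ b, d.pair (Sum.inl a) = some (Sum.inr b)) ∧
    (∃ b, d.pair (Sum.inr a) = some (Sum.inl b))

/-- The diagram of a permutation `σ`: right node `i` is connected to
left node `σ i`. -/
def permDiagram (n : ℕ) (σ : Equiv.Perm (Fin n)) : Diagram n where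
  pair := Sum.elim (fun a => some (Sum.inr (σ.symm a))) (fun a => some (Sum.inl (σ a)))
  symm := by
    rintro (a | a) (b | b) h <;> simp_all
    · rw [← h, Equiv.apply_symm_apply]
    · rw [← h, Equiv.symm_apply_apply]
  irrefl := by rintro (a | a) h <;> simp_all

/-- The diagram obtained from the identity diagram by deleting the `i`-th strand. -/
def rho (n : ℕ) (i : Fin n) : Diagram n where
  pair := Sum.elim (fun a => if a = i then none else some (Sum.inr a))
    (fun a => if a = i then none else some (Sum.inl a))
  symm := by
    rintro (a | a) (b | b) h <;>
        simp only [Sum.elim_inl, Sum.elim_inr] at h ⊢ <;>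
        split_ifs at h <;> simp_all
  irrefl := by
    rintro (a | a) h <;> simp only [Sum.elim_inl, Sum.elim_inr] at h <;>
      split_ifs at h <;> simp_all

lemma isRook_rho (n : ℕ) (i : Fin n) : IsRook (rho n i) := by
  intro a b
  constructor
  · show (if a = i then none else some (Sum.inr a) : Option _) ≠ _
    split_ifs <;> simp
  · show (if a = i then none else some (Sum.inl a) : Option _) ≠ _
    split_ifs <;> simp

end Diagram

open Diagram

/-- `IsDiagramAlgebra R n δ ε P A` says that `A` is (a model of) the subalgebra
of the rook-Brauer algebra `RBr_n(δ, ε)` over `R` spanned by the diagrams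
satisfying `P`: it is free as an `R`-module on those diagrams, the identity
diagram is the unit, and multiplication of basis diagrams is given by
concatenation, with a factor `δ` for each middle loop and a factor `ε` for
each contractible isolated middle component. -/
structure IsDiagramAlgebra (R : Type) [CommRing R] (n : ℕ) (δ ε : R)
    (P : Diagram n → Prop) (A : Type) [Ring A] [Algebra R A] : Type where
  basis : Module.Basis {d : Diagram n // P d} R A
  id_mem : P (idDiagram n)
  basis_one : basis ⟨idDiagram n, id_mem⟩ = 1
  concat_exists : ∀ x y : {d : Diagram n // P d}, ∃ z : Diagram n, ConcatEq x.1 y.1 z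
  concat_mem : ∀ (x y : {d : Diagram n // P d}) (z : Diagram n),
    ConcatEq x.1 y.1 z → P z
  basis_mul : ∀ (x y z : {d : Diagram n // P d}), ConcatEq x.1 y.1 z.1 →
    basis x * basis y = (δ ^ loopCount x.1 y.1 * ε ^ freeCount x.1 y.1) • basis z

namespace RBAux

open Diagram

variable {n : ℕ}

theorem Diagram.ext' {d e : Diagram n} (h : d.pair = e.pair) : d = e := by
  cases d; cases e; simp_all

theorem permDiagram_injective : Function.Injective (permDiagram n) := by
  intro σ τ h
  ext a
  have := congrArg (fun d : Diagram n => d.pair (Sum.inr a)) h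
  simp only [permDiagram, Sum.elim_inr, Option.some.injEq, Sum.inl.injEq] at this
  exact congrArg Fin.val this

theorem idDiagram_eq : idDiagram n = permDiagram n 1 := by
  apply Diagram.ext'
  funext u
  rcases u with a | a <;> simp [idDiagram, permDiagram] <;> rfl

theorem lrCount_permDiagram (σ : Equiv.Perm (Fin n)) : lrCount (permDiagram n σ) = n := by
  have e : {p : Fin n × Fin n // (permDiagram n σ).pair (Sum.inl p.1) = some (Sum.inr p.2)} ≃ Fin n :=
    { toFun := fun p => p.1.1
      invFun := fun a => ⟨(a, σ.symm a), by simp [permDiagram]⟩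
      left_inv := by
        rintro ⟨⟨a, b⟩, hp⟩
        simp only [permDiagram, Sum.elim_inl, Option.some.injEq, Sum.inr.injEq] at hp
        simp [hp]
      right_inv := fun a => rfl }
  rw [lrCount, Nat.card_congr e]
  simp

theorem lrCount_le (d : Diagram n) : lrCount d ≤ n := by
  have hinj : Function.Injective
      (fun p : {p : Fin n × Fin n // d.pair (Sum.inl p.1) = some (Sum.inr p.2)} => p.1.1) := by
    rintro ⟨⟨a, b⟩, hp⟩ ⟨⟨a', b'⟩, hp'⟩ hh
    simp only at hh
    subst hh
    rw [hp] at hp'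
    simp_all
  simpa [lrCount] using Nat.card_le_card_of_injective _ hinj

theorem exists_perm_of_lrCount {d : Diagram n} (hd : lrCount d = n) :
    ∃ σ : Equiv.Perm (Fin n), d = permDiagram n σ := by
  classical
  set S := {p : Fin n × Fin n // d.pair (Sum.inl p.1) = some (Sum.inr p.2)} with hS
  have hinj : Function.Injective (fun p : S => p.1.1) := by
    rintro ⟨⟨a, b⟩, hp⟩ ⟨⟨a', b'⟩, hp'⟩ hh
    simp only at hh
    subst hh
    rw [hp] at hp'
    simp_all
  have hbij : Function.Bijective (fun p : S => p.1.1) := by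
    rw [Nat.bijective_iff_injective_and_card]
    exact ⟨hinj, by simpa [lrCount] using hd⟩
  have hinj2 : Function.Injective (fun p : S => p.1.2) := by
    rintro ⟨⟨a, b⟩, hp⟩ ⟨⟨a', b'⟩, hp'⟩ hh
    simp only at hh
    subst hh
    have h1 := d.symm _ _ hp
    have h2 := d.symm _ _ hp'
    rw [h1] at h2
    simp_all
  have hbij2 : Function.Bijective (fun p : S => p.1.2) := by
    rw [Nat.bijective_iff_injective_and_card]
    exact ⟨hinj2, by simpa [lrCount] using hd⟩
  let e1 := Equiv.ofBijective _ hbij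
  let e2 := Equiv.ofBijective _ hbij2
  refine ⟨e2.symm.trans e1, ?_⟩
  apply Diagram.ext'
  funext u
  rcases u with a | a
  · have hp : (permDiagram n (e2.symm.trans e1)).pair (Sum.inl a)
        = some (Sum.inr (e2 (e1.symm a))) := by
      simp [permDiagram]
    rw [hp]
    have key := (e1.symm a).2
    have h1 : (e1.symm a).1.1 = a := e1.apply_symm_apply a
    rw [h1] at key
    exact key
  · have hp : (permDiagram n (e2.symm.trans e1)).pair (Sum.inr a)
        = some (Sum.inl (e1 (e2.symm a))) := by
      simp [permDiagram]
    rw [hp]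
    have key := (e2.symm a).2
    have h2 : (e2.symm a).1.2 = a := e2.apply_symm_apply a
    rw [h2] at key
    exact d.symm _ _ key

theorem concatEq_unique {x y z z' : Diagram n} (h : ConcatEq x y z) (h' : ConcatEq x y z') :
    z = z' := by
  apply Diagram.ext'
  funext u
  rcases hv : z'.pair u with _ | v
  · rcases hv' : z.pair u with _ | v
    · rfl
    · exact absurd ((h' u v).2 ((h u v).1 hv')) (by simp [hv])
  · exact (h u v).2 ((h' u v).1 hv)

/-- Component invariant for the concatenation of two permutation diagrams. -/
theorem perm_cConn_invariant (σ τ : Equiv.Perm (Fin n)) {u v : CNode n}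
    (h : cConn (permDiagram n σ) (permDiagram n τ) u v) :
    Sum.elim (fun a => (a : Fin n)) (Sum.elim (fun b => σ b) (fun c => σ (τ c))) u =
    Sum.elim (fun a => (a : Fin n)) (Sum.elim (fun b => σ b) (fun c => σ (τ c))) v := by
  induction h with
  | rel a b hr =>
    rcases hr with ⟨p, q, hpq, hp, hq⟩ | ⟨p, q, hpq, hp, hq⟩
    · subst hp; subst hq
      rcases p with p | p <;> rcases q with q | q <;>
        simp only [permDiagram, Sum.elim_inl, Sum.elim_inr, Option.some.injEq,
          Sum.inl.injEq, Sum.inr.injEq, reduceCtorEq] at hpq <;>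
        subst hpq <;> simp [eLM]
    · subst hp; subst hq
      rcases p with p | p <;> rcases q with q | q <;>
        simp only [permDiagram, Sum.elim_inl, Sum.elim_inr, Option.some.injEq,
          Sum.inl.injEq, Sum.inr.injEq, reduceCtorEq] at hpq <;>
        subst hpq <;> simp [eMR]
  | refl a => rfl
  | symm a b _ ih => exact ih.symm
  | trans a b c _ _ ih1 ih2 => exact ih1.trans ih2

theorem concatEq_perm (σ τ : Equiv.Perm (Fin n)) :
    ConcatEq (permDiagram n σ) (permDiagram n τ) (permDiagram n (σ * τ)) := by
  intro u v
  constructor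
  · intro huv
    rcases u with a | a
    · have hv : v = Sum.inr (τ.symm (σ.symm a)) := by
        simp only [permDiagram, Sum.elim_inl, Option.some.injEq] at huv
        exact huv.symm
      subst hv
      refine ⟨by simp, ?_⟩
      have e1 : cEdge (permDiagram n σ) (permDiagram n τ) (eB (Sum.inl a))
          (mid (σ.symm a)) :=
        Or.inl ⟨Sum.inl a, Sum.inr (σ.symm a), by simp [permDiagram], rfl, rfl⟩
      have e2 : cEdge (permDiagram n σ) (permDiagram n τ) (mid (σ.symm a))
          (eB (Sum.inr (τ.symm (σ.symm a)))) :=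
        Or.inr ⟨Sum.inl (σ.symm a), Sum.inr (τ.symm (σ.symm a)), by simp [permDiagram],
          rfl, rfl⟩
      exact (Relation.EqvGen.rel _ _ e1).trans _ _ _ (Relation.EqvGen.rel _ _ e2)
    · have hv : v = Sum.inl (σ (τ a)) := by
        simp only [permDiagram, Sum.elim_inr, Option.some.injEq] at huv
        rw [← huv]
        rfl
      subst hv
      refine ⟨by simp, ?_⟩
      have e1 : cEdge (permDiagram n σ) (permDiagram n τ) (eB (Sum.inr a)) (mid (τ a)) :=
        Or.inr ⟨Sum.inr a, Sum.inl (τ a), by simp [permDiagram], rfl, rfl⟩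
      have e2 : cEdge (permDiagram n σ) (permDiagram n τ) (mid (τ a))
          (eB (Sum.inl (σ (τ a)))) :=
        Or.inl ⟨Sum.inr (τ a), Sum.inl (σ (τ a)), by simp [permDiagram], rfl, rfl⟩
      exact (Relation.EqvGen.rel _ _ e1).trans _ _ _ (Relation.EqvGen.rel _ _ e2)
  · rintro ⟨hne, hconn⟩
    have hinv := perm_cConn_invariant σ τ hconn
    rcases u with a | a <;> rcases v with b | b
    · simp only [eB, Sum.elim_inl, Sum.elim_inr] at hinv
      exact absurd (by rw [hinv]) hne
    · simp only [eB, Sum.elim_inl, Sum.elim_inr] at hinv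
      simp only [permDiagram, Sum.elim_inl, Option.some.injEq, Sum.inr.injEq]
      have : (σ * τ) b = a := by simpa [Equiv.Perm.mul_apply] using hinv.symm
      rw [← this, Equiv.symm_apply_apply]
    · simp only [eB, Sum.elim_inl, Sum.elim_inr] at hinv
      simp only [permDiagram, Sum.elim_inr, Option.some.injEq, Sum.inl.injEq]
      simpa [Equiv.Perm.mul_apply] using hinv
    · simp only [eB, Sum.elim_inl, Sum.elim_inr] at hinv
      have : a = b := by
        have := σ.injective hinv
        exact τ.injective this
      exact absurd (by rw [this]) hne

theorem not_midIsolated_perm (σ τ : Equiv.Perm (Fin n)) (a : Fin n) :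
    ¬ midIsolated (permDiagram n σ) (permDiagram n τ) a := by
  intro h
  apply h (Sum.inl (σ a))
  refine Relation.EqvGen.rel _ _ (Or.inl ⟨Sum.inl (σ a), Sum.inr a, ?_, rfl, rfl⟩)
  simp [permDiagram]

theorem loopCount_perm (σ τ : Equiv.Perm (Fin n)) :
    loopCount (permDiagram n σ) (permDiagram n τ) = 0 := by
  have : IsEmpty {a : Fin n // isLoopNode (permDiagram n σ) (permDiagram n τ) a} :=
    ⟨fun a => not_midIsolated_perm σ τ a.1 a.2.1⟩
  have : IsEmpty (Quot (fun a b : {a : Fin n // isLoopNode (permDiagram n σ) (permDiagram n τ) a} =>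
      cConn (permDiagram n σ) (permDiagram n τ) (mid a.1) (mid b.1))) :=
    ⟨fun q => by obtain ⟨a, -⟩ := Quot.exists_rep q; exact this.false a⟩
  exact Nat.card_of_isEmpty

theorem freeCount_perm (σ τ : Equiv.Perm (Fin n)) :
    freeCount (permDiagram n σ) (permDiagram n τ) = 0 := by
  have : IsEmpty {a : Fin n // isFreeNode (permDiagram n σ) (permDiagram n τ) a} :=
    ⟨fun a => not_midIsolated_perm σ τ a.1 a.2.1⟩
  have : IsEmpty (Quot (fun a b : {a : Fin n // isFreeNode (permDiagram n σ) (permDiagram n τ) a} =>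
      cConn (permDiagram n σ) (permDiagram n τ) (mid a.1) (mid b.1))) :=
    ⟨fun q => by obtain ⟨a, -⟩ := Quot.exists_rep q; exact this.false a⟩
  exact Nat.card_of_isEmpty

theorem exists_edge_of_eqvGen {α : Type*} {r : α → α → Prop} {a b : α}
    (h : Relation.EqvGen r a b) :
    a = b ∨ ((∃ c, r a c ∨ r c a) ∧ (∃ c, r b c ∨ r c b)) := by
  induction h with
  | rel x y hr => exact Or.inr ⟨⟨y, Or.inl hr⟩, ⟨x, Or.inr hr⟩⟩
  | refl x => exact Or.inl rfl
  | symm x y _ ih => exact ih.imp Eq.symm And.symm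
  | trans x y z _ _ ih1 ih2 =>
    rcases ih1 with rfl | ⟨h1, h1'⟩
    · exact ih2
    · rcases ih2 with rfl | ⟨_, h2⟩
      · exact Or.inr ⟨h1, h1'⟩
      · exact Or.inr ⟨h1, h2⟩

theorem concat_lr_exists_left {x y z : Diagram n} (hz : ConcatEq x y z) {u v : Fin n}
    (huv : z.pair (Sum.inl u) = some (Sum.inr v)) :
    ∃ m, x.pair (Sum.inl u) = some (Sum.inr m) := by
  obtain ⟨hne, hconn⟩ := (hz _ _).1 huv
  have hea : (Sum.inl u : CNode n) = eB (Sum.inl u) := rfl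
  rcases exists_edge_of_eqvGen hconn with heq | ⟨⟨c, hc⟩, -⟩
  · exact absurd heq (by simp [eB])
  · -- extract an x-edge at `Sum.inl u`
    have hw : ∃ w, x.pair (Sum.inl u) = some w := by
      rcases hc with (⟨p, q, hpq, hp, hq⟩ | ⟨p, q, hpq, hp, hq⟩) |
          (⟨p, q, hpq, hp, hq⟩ | ⟨p, q, hpq, hp, hq⟩)
      · rcases p with p | p
        · simp only [eLM, eB, Sum.elim_inl, Sum.inl.injEq] at hp
          exact ⟨q, hp ▸ hpq⟩
        · exact absurd hp (by simp [eLM, eB])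
      · rcases p with p | p <;> exact absurd hp (by simp [eMR, eB])
      · rcases q with q | q
        · simp only [eLM, eB, Sum.elim_inl, Sum.inl.injEq] at hq
          exact ⟨p, x.symm _ _ (hq ▸ hpq)⟩
        · exact absurd hq (by simp [eLM, eB])
      · rcases q with q | q <;> exact absurd hq (by simp [eMR, eB])
    obtain ⟨w, hw⟩ := hw
    rcases w with w | w
    · exfalso
      have hne2 : (Sum.inl u : Fin n ⊕ Fin n) ≠ Sum.inl w := fun hh => x.irrefl _ (hh ▸ hw)
      have : z.pair (Sum.inl u) = some (Sum.inl w) := by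
        refine (hz _ _).2 ⟨hne2, Relation.EqvGen.rel _ _ (Or.inl ⟨_, _, hw, rfl, rfl⟩)⟩
      rw [huv] at this
      simp at this
    · exact ⟨w, hw⟩

theorem concat_lr_exists_right {x y z : Diagram n} (hz : ConcatEq x y z) {u v : Fin n}
    (huv : z.pair (Sum.inl u) = some (Sum.inr v)) :
    ∃ m, y.pair (Sum.inl m) = some (Sum.inr v) := by
  have huv' : z.pair (Sum.inr v) = some (Sum.inl u) := z.symm _ _ huv
  obtain ⟨hne, hconn⟩ := (hz _ _).1 huv'
  rcases exists_edge_of_eqvGen hconn with heq | ⟨⟨c, hc⟩, -⟩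
  · exact absurd heq (by simp [eB])
  · have hw : ∃ w, y.pair (Sum.inr v) = some w := by
      rcases hc with (⟨p, q, hpq, hp, hq⟩ | ⟨p, q, hpq, hp, hq⟩) |
          (⟨p, q, hpq, hp, hq⟩ | ⟨p, q, hpq, hp, hq⟩)
      · rcases p with p | p <;> exact absurd hp (by simp [eLM, eB])
      · rcases p with p | p
        · exact absurd hp (by simp [eMR, eB])
        · simp only [eMR, Sum.elim_inr, eB] at hp
          have : p = v := by simpa using hp
          exact ⟨q, this ▸ hpq⟩
      · rcases q with q | q <;> exact absurd hq (by simp [eLM, eB])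
      · rcases q with q | q
        · exact absurd hq (by simp [eMR, eB])
        · simp only [eMR, Sum.elim_inr, eB] at hq
          have : q = v := by simpa using hq
          exact ⟨p, y.symm _ _ (this ▸ hpq)⟩
    obtain ⟨w, hw⟩ := hw
    rcases w with w | w
    · exact ⟨w, y.symm _ _ hw⟩
    · exfalso
      have hne2 : (Sum.inr v : Fin n ⊕ Fin n) ≠ Sum.inr w := fun hh => y.irrefl _ (hh ▸ hw)
      have : z.pair (Sum.inr v) = some (Sum.inr w) := by
        refine (hz _ _).2 ⟨hne2, Relation.EqvGen.rel _ _ (Or.inr ⟨_, _, hw, rfl, rfl⟩)⟩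
      rw [huv'] at this
      simp at this

theorem lrCount_concat_le_left {x y z : Diagram n} (hz : ConcatEq x y z) :
    lrCount z ≤ lrCount x := by
  classical
  refine Nat.card_le_card_of_injective
    (fun p : {p : Fin n × Fin n // z.pair (Sum.inl p.1) = some (Sum.inr p.2)} =>
      (⟨(p.1.1, Classical.choose (concat_lr_exists_left hz p.2)),
        Classical.choose_spec (concat_lr_exists_left hz p.2)⟩ :
        {p : Fin n × Fin n // x.pair (Sum.inl p.1) = some (Sum.inr p.2)})) ?_
  rintro ⟨⟨a, b⟩, hp⟩ ⟨⟨a', b'⟩, hp'⟩ hh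
  simp only [Subtype.mk.injEq, Prod.mk.injEq] at hh
  obtain ⟨rfl, -⟩ := hh
  rw [hp] at hp'
  simp_all

theorem lrCount_concat_le_right {x y z : Diagram n} (hz : ConcatEq x y z) :
    lrCount z ≤ lrCount y := by
  classical
  refine Nat.card_le_card_of_injective
    (fun p : {p : Fin n × Fin n // z.pair (Sum.inl p.1) = some (Sum.inr p.2)} =>
      (⟨(Classical.choose (concat_lr_exists_right hz p.2), p.1.2),
        Classical.choose_spec (concat_lr_exists_right hz p.2)⟩ :
        {p : Fin n × Fin n // y.pair (Sum.inl p.1) = some (Sum.inr p.2)})) ?_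
  rintro ⟨⟨a, b⟩, hp⟩ ⟨⟨a', b'⟩, hp'⟩ hh
  simp only [Subtype.mk.injEq, Prod.mk.injEq] at hh
  obtain ⟨-, rfl⟩ := hh
  have h1 := z.symm _ _ hp
  have h2 := z.symm _ _ hp'
  rw [h1] at h2
  simp_all

end RBAux
open Diagram RBAux in
/-- Let `A` be a subalgebra of the rook-Brauer algebra `RBr_n(δ, ε)` that is free
as an `R`-module on a subset of the rook-Brauer diagrams (those satisfying `P`)
and contains at least one diagram with the maximum number `n` of left-to-right
connections.  Let `A_max` be the `R`-span of the diagrams in `A` with exactly `n`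
left-to-right connections, and let `A ∩ I_{n−1}` be the span of the diagrams in
`A` with fewer than `n` left-to-right connections.  Then `A_max` is a subalgebra
of `A` isomorphic to the group ring `RG` for some subgroup `G ≤ Σ_n`, and the
composite `A_max → A → A/(A ∩ I_{n−1})` is an algebra isomorphism, exhibiting
`A_max` as a retract of `A`; this is expressed by an injective algebra map
`f : RG → A` with image `A_max` and a retraction `π : A → RG` with
`π ∘ f = id` whose kernel is exactly `A ∩ I_{n−1}`. -/
theorem canonical_group_algebra_retract (R A : Type) [CommRing R] [Ring A]
    [Algebra R A] (n : ℕ) (δ ε : R) (P : Diagram n → Prop)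
    (h : IsDiagramAlgebra R n δ ε P A)
    (hmax : ∃ d : Diagram n, P d ∧ lrCount d = n) :
    ∃ (G : Subgroup (Equiv.Perm (Fin n)))
      (f : MonoidAlgebra R G →ₐ[R] A) (π : A →ₐ[R] MonoidAlgebra R G),
      Function.Injective f ∧
      Set.range f = (Submodule.span R
        {x : A | ∃ d : {d : Diagram n // P d}, lrCount d.1 = n ∧ x = h.basis d} : Set A) ∧
      π.comp f = AlgHom.id R (MonoidAlgebra R G) ∧
      (∀ a : A, π a = 0 ↔ a ∈ Submodule.span R
        {x : A | ∃ d : {d : Diagram n // P d}, lrCount d.1 < n ∧ x = h.basis d}) := by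
  classical
  clear hmax
  -- the subgroup
  have hone : P (permDiagram n 1) := idDiagram_eq ▸ h.id_mem
  have hmul : ∀ {σ τ : Equiv.Perm (Fin n)}, P (permDiagram n σ) → P (permDiagram n τ) →
      P (permDiagram n (σ * τ)) := fun {σ τ} hσ hτ =>
    h.concat_mem ⟨_, hσ⟩ ⟨_, hτ⟩ _ (concatEq_perm σ τ)
  have hpow : ∀ (σ : Equiv.Perm (Fin n)), P (permDiagram n σ) → ∀ k : ℕ,
      P (permDiagram n (σ ^ (k + 1))) := by
    intro σ hσ k
    induction k with
    | zero => simpa using hσ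
    | succ m ih => rw [pow_succ]; exact hmul ih hσ
  have hinv : ∀ {σ : Equiv.Perm (Fin n)}, P (permDiagram n σ) → P (permDiagram n σ⁻¹) := by
    intro σ hσ
    have hpos : 0 < orderOf σ := orderOf_pos σ
    obtain ⟨k, hk⟩ : ∃ k, orderOf σ = k + 1 := ⟨orderOf σ - 1, by omega⟩
    have hσinv : σ⁻¹ = σ ^ k := by
      have h1 : σ * σ ^ k = 1 := by
        rw [← pow_succ', ← hk, pow_orderOf_eq_one]
      exact (inv_eq_of_mul_eq_one_right h1)
    rcases k with _ | m
    · rw [hσinv, pow_zero]; exact hone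
    · rw [hσinv]; exact hpow σ hσ m
  let G : Subgroup (Equiv.Perm (Fin n)) :=
    { carrier := {σ | P (permDiagram n σ)}
      one_mem' := hone
      mul_mem' := fun ha hb => hmul ha hb
      inv_mem' := fun ha => hinv ha }
  have hGmem : ∀ g : G, P (permDiagram n g.1) := fun g => g.2
  -- the basis vector attached to a group element
  let v : G → A := fun g => h.basis ⟨permDiagram n g.1, hGmem g⟩
  -- the algebra map f
  let φ : G →* A :=
    { toFun := v
      map_one' := by
        show h.basis ⟨permDiagram n 1, hone⟩ = 1
        have he : (⟨permDiagram n 1, hone⟩ : {d : Diagram n // P d}) = ⟨idDiagram n, h.id_mem⟩ :=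
          Subtype.ext idDiagram_eq.symm
        rw [he, h.basis_one]
      map_mul' := by
        intro g₁ g₂
        show h.basis ⟨permDiagram n (g₁.1 * g₂.1), _⟩ = v g₁ * v g₂
        have hmul' := h.basis_mul ⟨permDiagram n g₁.1, hGmem g₁⟩ ⟨permDiagram n g₂.1, hGmem g₂⟩
          ⟨permDiagram n (g₁.1 * g₂.1), hmul (hGmem g₁) (hGmem g₂)⟩ (concatEq_perm g₁.1 g₂.1)
        rw [loopCount_perm, freeCount_perm] at hmul'
        simpa using hmul'.symm }
  let f : MonoidAlgebra R G →ₐ[R] A := MonoidAlgebra.lift R A G φ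
  -- injectivity of f
  have hvinj : Function.Injective (fun g : G => (⟨permDiagram n g.1, hGmem g⟩ : {d // P d})) := by
    intro g g' hgg
    exact Subtype.ext (permDiagram_injective (congrArg Subtype.val hgg))
  have hli : LinearIndependent R v := h.basis.linearIndependent.comp _ hvinj
  have hflin : f.toLinearMap =
      (Finsupp.linearCombination R v).comp (MonoidAlgebra.coeffLinearEquiv R).toLinearMap := by
    apply MonoidAlgebra.lhom_ext'
    intro g
    apply LinearMap.ext
    intro r
    show f (MonoidAlgebra.single g r) = Finsupp.linearCombination R v (Finsupp.single g r)
    rw [MonoidAlgebra.lift_single, Finsupp.linearCombination_single]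
    rfl
  have hfinj : Function.Injective f := by
    have : Function.Injective f.toLinearMap := by
      rw [hflin, LinearMap.coe_comp]
      exact (show Function.Injective (Finsupp.linearCombination R v) from hli).comp
        (MonoidAlgebra.coeffLinearEquiv R).injective
    exact this
  -- the maximal diagrams
  let σOf : (d : {d : Diagram n // P d}) → lrCount d.1 = n → G := fun d hd =>
    ⟨Classical.choose (exists_perm_of_lrCount hd), by
      show P (permDiagram n _)
      rw [← Classical.choose_spec (exists_perm_of_lrCount hd)]
      exact d.2⟩
  have σOf_spec : ∀ (d : {d : Diagram n // P d}) (hd : lrCount d.1 = n),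
      permDiagram n (σOf d hd).1 = d.1 := fun d hd =>
    (Classical.choose_spec (exists_perm_of_lrCount hd)).symm
  have σOf_unique : ∀ (d : {d : Diagram n // P d}) (hd : lrCount d.1 = n) (g : G),
      d.1 = permDiagram n g.1 → σOf d hd = g := by
    intro d hd g hg
    apply Subtype.ext
    apply permDiagram_injective
    rw [σOf_spec d hd, hg]
  -- the retraction
  let c : {d : Diagram n // P d} → MonoidAlgebra R G := fun d =>
    if hd : lrCount d.1 = n then MonoidAlgebra.single (σOf d hd) 1 else 0
  let π₀ : A →ₗ[R] MonoidAlgebra R G := h.basis.constr ℕ c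
  have hπ₀ : ∀ d, π₀ (h.basis d) = c d := fun d => h.basis.constr_basis ℕ c d
  have hmul_basis : ∀ x y : {d : Diagram n // P d},
      π₀ (h.basis x * h.basis y) = π₀ (h.basis x) * π₀ (h.basis y) := by
    intro x y
    obtain ⟨z0, hz0⟩ := h.concat_exists x y
    set z : {d : Diagram n // P d} := ⟨z0, h.concat_mem x y z0 hz0⟩ with hzdef
    rw [h.basis_mul x y z hz0, map_smul, hπ₀, hπ₀, hπ₀]
    by_cases hx : lrCount x.1 = n
    · by_cases hy : lrCount y.1 = n
      · have hcc : ConcatEq x.1 y.1 (permDiagram n ((σOf x hx).1 * (σOf y hy).1)) := by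
          have := concatEq_perm (σOf x hx).1 (σOf y hy).1
          rwa [σOf_spec x hx, σOf_spec y hy] at this
        have hzeq : z.1 = permDiagram n ((σOf x hx) * (σOf y hy) : G).1 :=
          concatEq_unique hz0 hcc
        have hl : loopCount x.1 y.1 = 0 := by
          rw [← σOf_spec x hx, ← σOf_spec y hy]; exact loopCount_perm _ _
        have hfr : freeCount x.1 y.1 = 0 := by
          rw [← σOf_spec x hx, ← σOf_spec y hy]; exact freeCount_perm _ _
        have hz : lrCount z.1 = n := by rw [hzeq]; exact lrCount_permDiagram _
        show (δ ^ loopCount x.1 y.1 * ε ^ freeCount x.1 y.1) • c z = c x * c y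
        rw [hl, hfr]
        simp only [pow_zero, one_mul, one_smul, c, dif_pos hx, dif_pos hy, dif_pos hz]
        rw [MonoidAlgebra.single_mul_single, σOf_unique z hz _ hzeq, one_mul]
      · have hz : ¬ lrCount z.1 = n := by
          have h1 := lrCount_concat_le_right hz0
          have h2 := lrCount_le y.1
          show ¬ lrCount z0 = n
          omega
        show (δ ^ loopCount x.1 y.1 * ε ^ freeCount x.1 y.1) • c z = c x * c y
        simp [c, dif_neg hz, dif_neg hy]
    · have hz : ¬ lrCount z.1 = n := by
        have h1 := lrCount_concat_le_left hz0
        have h2 := lrCount_le x.1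
        show ¬ lrCount z0 = n
        omega
      show (δ ^ loopCount x.1 y.1 * ε ^ freeCount x.1 y.1) • c z = c x * c y
      simp [c, dif_neg hz, dif_neg hx]
  have hmul_all : ∀ a b : A, π₀ (a * b) = π₀ a * π₀ b := by
    refine (LinearMap.map_mul_iff π₀).2 (h.basis.ext fun x => h.basis.ext fun y => ?_)
    simpa using hmul_basis x y
  have hid : lrCount (idDiagram n) = n := by rw [idDiagram_eq]; exact lrCount_permDiagram 1
  have hone_π : π₀ 1 = 1 := by
    rw [← h.basis_one, hπ₀]
    show c ⟨idDiagram n, h.id_mem⟩ = 1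
    rw [MonoidAlgebra.one_def]
    simp only [c, dif_pos hid]
    congr 1
    exact σOf_unique _ hid 1 idDiagram_eq
  let π : A →ₐ[R] MonoidAlgebra R G := AlgHom.ofLinearMap π₀ hone_π hmul_all
  have hπ : ∀ d, π (h.basis d) = c d := hπ₀
  -- retraction property
  have hretract : π.comp f = AlgHom.id R (MonoidAlgebra R G) := by
    refine MonoidAlgebra.algHom_ext (fun g => ?_) (Subsingleton.elim _ _)
    show π (f (MonoidAlgebra.of R G g)) = MonoidAlgebra.of R G g
    rw [show f (MonoidAlgebra.of R G g) = φ g from MonoidAlgebra.lift_of φ g]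
    show π (h.basis ⟨permDiagram n g.1, hGmem g⟩) = _
    rw [hπ]
    have hd : lrCount (permDiagram n g.1) = n := lrCount_permDiagram _
    simp only [c, dif_pos hd]
    rw [σOf_unique _ hd g rfl]
    rfl
  -- range of f
  have hrange_v : Set.range v =
      {x : A | ∃ d : {d : Diagram n // P d}, lrCount d.1 = n ∧ x = h.basis d} := by
    ext x
    constructor
    · rintro ⟨g, rfl⟩
      exact ⟨⟨permDiagram n g.1, hGmem g⟩, lrCount_permDiagram _, rfl⟩
    · rintro ⟨d, hd, rfl⟩
      refine ⟨σOf d hd, ?_⟩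
      show h.basis _ = h.basis d
      congr 1
      exact Subtype.ext (σOf_spec d hd)
  have hrange_f : Set.range f = (Submodule.span R
      {x : A | ∃ d : {d : Diagram n // P d}, lrCount d.1 = n ∧ x = h.basis d} : Set A) := by
    have h1 : Set.range ⇑f = Set.range ⇑f.toLinearMap := rfl
    rw [h1, hflin, LinearMap.coe_comp, LinearEquiv.coe_coe,
      (MonoidAlgebra.coeffLinearEquiv R).surjective.range_comp, ← LinearMap.coe_range, Finsupp.range_linearCombination, hrange_v]
  -- kernel of π
  refine ⟨G, f, π, hfinj, hrange_f, hretract, ?_⟩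
  intro a
  set lo : Set A := {x : A | ∃ d : {d : Diagram n // P d}, lrCount d.1 < n ∧ x = h.basis d}
    with hlo_def
  set hi : Set A := {x : A | ∃ d : {d : Diagram n // P d}, lrCount d.1 = n ∧ x = h.basis d}
    with hhi_def
  have hlo_ker : ∀ b ∈ Submodule.span R lo, π b = 0 := by
    intro b hb
    have : Submodule.span R lo ≤ LinearMap.ker π₀ := by
      rw [Submodule.span_le]
      rintro x ⟨d, hd, rfl⟩
      have : π₀ (h.basis d) = 0 := by
        rw [hπ₀]
        exact dif_neg (by omega)
      simpa [LinearMap.mem_ker] using this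
    exact this hb
  constructor
  · intro ha
    -- decompose a
    have htop : a ∈ Submodule.span R (Set.range ⇑h.basis) := by
      rw [h.basis.span_eq]; trivial
    have hsub : Set.range ⇑h.basis ⊆ hi ∪ lo := by
      rintro x ⟨d, rfl⟩
      rcases eq_or_lt_of_le (lrCount_le d.1) with hd | hd
      · exact Or.inl ⟨d, hd, rfl⟩
      · exact Or.inr ⟨d, hd, rfl⟩
    have : a ∈ Submodule.span R hi ⊔ Submodule.span R lo := by
      rw [← Submodule.span_union]
      exact Submodule.span_mono hsub htop
    obtain ⟨xh, hxh, xl, hxl, rfl⟩ := Submodule.mem_sup.1 this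
    obtain ⟨c0, rfl⟩ : ∃ c0, f c0 = xh := by
      have : xh ∈ Set.range f := by rw [hrange_f]; exact hxh
      exact this
    have hπf : π (f c0) = c0 := by
      have := congrArg (fun ψ => ψ c0) hretract
      simpa using this
    have hfix : π (f c0 + xl) = c0 := by
      rw [map_add, hπf, hlo_ker xl hxl, add_zero]
    have hc0 : c0 = 0 := by rw [← hfix, ha]
    rw [hc0, map_zero, zero_add]
    exact hxl
  · intro ha
    exact hlo_ker a ha
end

section
/- In the rook algebra R_n(ε), the left ideal R_n(ε)·ρ_i has R-basis consisting of exactly those rook diagrams in which the i-th node on the right is not connected to any node on the left. -/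
open MulOpposite

open Diagram

section Aux

open Diagram

variable {n : ℕ}

private lemma eqvGen_congr {α β : Type*} {r : α → α → Prop} (f : α → β)
    (hf : ∀ a b, r a b → f a = f b) {a b : α} (h : Relation.EqvGen r a b) :
    f a = f b := by
  induction h with
  | rel a b hab => exact hf a b hab
  | refl => rfl
  | symm _ _ _ ih => exact ih.symm
  | trans _ _ _ _ _ ih1 ih2 => exact ih1.trans ih2

private lemma rho_pair_inl (i a : Fin n) :
    (rho n i).pair (Sum.inl a) = if a = i then none else some (Sum.inr a) := rfl

private lemma rho_pair_inr (i a : Fin n) :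
    (rho n i).pair (Sum.inr a) = if a = i then none else some (Sum.inl a) := rfl

/-- In a product `x · ρ_i`, the right node `i` of the result is vacant. -/
private lemma pair_inr_eq_none_of_concat (x z : Diagram n) (i : Fin n)
    (hz : ConcatEq x (rho n i) z) : z.pair (Sum.inr i) = none := by
  by_contra hne
  obtain ⟨v, hv⟩ := Option.ne_none_iff_exists'.mp hne
  obtain ⟨huv, hconn⟩ := (hz _ _).mp hv
  set u0 : CNode n := Sum.inr (Sum.inr i) with hu0
  have hedge : ∀ a b : CNode n, cEdge x (rho n i) a b → a ≠ u0 ∧ b ≠ u0 := by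
    rintro a b (⟨p, q, hpq, hu, hv'⟩ | ⟨p, q, hpq, hu, hv'⟩)
    · subst hu hv'
      rcases p with p | p <;> rcases q with q | q <;>
        simp [eLM, u0, mid]
    · subst hu hv'
      rcases p with p | p <;> rcases q with q | q <;>
          first
            | (rw [rho_pair_inl] at hpq; split_ifs at hpq with hpi <;>
                simp_all [eMR, u0])
            | (rw [rho_pair_inr] at hpq; split_ifs at hpq with hpi <;>
                simp_all [eMR, u0])
  have key := eqvGen_congr (fun w => (w = u0 : Prop))
    (fun a b hab => by
      have := hedge a b hab
      simp [this.1, this.2]) hconn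
  have hvB : eB v = u0 := by
    have h2 : (eB (Sum.inr i : Fin n ⊕ Fin n) = u0) = (eB v = u0) := key
    rw [← h2]
    rfl
  have hvi : v = Sum.inr i := by
    rcases v with a | a <;> simp_all [eB, u0]
  exact huv hvi.symm

/-- Every rook diagram with right node `i` vacant has a vacant left node. -/
private lemma exists_vacant_left (d : Diagram n) (hd : IsRook d) (i : Fin n)
    (hi : d.pair (Sum.inr i) = none) : ∃ j, d.pair (Sum.inl j) = none := by
  by_contra hc
  push_neg at hc
  have H : ∀ j : Fin n, ∃ b, d.pair (Sum.inl j) = some (Sum.inr b) := by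
    intro j
    rcases hp : d.pair (Sum.inl j) with _ | (b | b)
    · exact absurd hp (hc j)
    · exact absurd hp (hd j b).1
    · exact ⟨b, rfl⟩
  choose g hg using H
  have hinj : Function.Injective g := by
    intro a b hab
    have ha := d.symm _ _ (hg a)
    have hb := d.symm _ _ (hg b)
    rw [hab] at ha
    rw [ha] at hb
    simpa using hb
  obtain ⟨j, hj⟩ := (Finite.injective_iff_surjective.mp hinj) i
  have hcon := d.symm _ _ (hg j)
  rw [hj, hi] at hcon
  cases hcon

variable (d : Diagram n) (hd : IsRook d) (i j : Fin n)
  (hi : d.pair (Sum.inr i) = none) (hj : d.pair (Sum.inl j) = none)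

/-- The diagram `d` with an extra edge from left node `j` to right node `i`. -/
private def addEdge : Diagram n where
  pair := Sum.elim (fun a => if a = j then some (Sum.inr i) else d.pair (Sum.inl a))
    (fun a => if a = i then some (Sum.inl j) else d.pair (Sum.inr a))
  symm := by
    rintro (a | a) (b | b) h <;> simp only [Sum.elim_inl, Sum.elim_inr] at h ⊢
    · split_ifs at h with h1
      · simp at h
      · exact absurd h (hd a b).1
    · split_ifs at h with h1
      · subst h1
        simp only [Option.some.injEq, Sum.inr.injEq] at h
        subst h
        simp
      · have hbi : b ≠ i := by
          intro e; subst e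
          have h2 := d.symm _ _ h
          rw [hi] at h2; cases h2
        rw [if_neg hbi]
        exact d.symm _ _ h
    · split_ifs at h with h1
      · subst h1
        simp only [Option.some.injEq, Sum.inl.injEq] at h
        subst h
        simp
      · have hbj : b ≠ j := by
          intro e; subst e
          have h2 := d.symm _ _ h
          rw [hj] at h2; cases h2
        rw [if_neg hbj]
        exact d.symm _ _ h
    · split_ifs at h with h1
      · simp at h
      · exact absurd h (hd a b).2
  irrefl := by
    rintro (a | a) h <;> simp only [Sum.elim_inl, Sum.elim_inr] at h <;>
      split_ifs at h
    · simp at h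
    · exact (hd a a).1 h
    · simp at h
    · exact (hd a a).2 h

private lemma isRook_addEdge : IsRook (addEdge d hd i j hi hj) := by
  intro a b
  constructor
  · show (if a = j then some (Sum.inr i) else d.pair (Sum.inl a)) ≠ _
    split_ifs
    · simp
    · exact (hd a b).1
  · show (if a = i then some (Sum.inl j) else d.pair (Sum.inr a)) ≠ _
    split_ifs
    · simp
    · exact (hd a b).2

private lemma addEdge_pair_inl (a : Fin n) :
    (addEdge d hd i j hi hj).pair (Sum.inl a) =
      if a = j then some (Sum.inr i) else d.pair (Sum.inl a) := rfl

private lemma addEdge_pair_inr (a : Fin n) :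
    (addEdge d hd i j hi hj).pair (Sum.inr a) =
      if a = i then some (Sum.inl j) else d.pair (Sum.inr a) := rfl

/-- Canonical representative of a connected component of the concatenation of a
rook diagram `x` and `rho n i`. -/
private def canon (x : Diagram n) (i : Fin n) : CNode n → CNode n :=
  Sum.elim
    (fun a => ((x.pair (Sum.inl a)).bind Sum.getRight?).elim (Sum.inl a)
      (fun b => Sum.inr (Sum.inl b)))
    (Sum.elim (fun b => Sum.inr (Sum.inl b))
      (fun b => if b = i then Sum.inr (Sum.inr b) else Sum.inr (Sum.inl b)))

private lemma canon_edge (x : Diagram n) (hx : IsRook x) (i : Fin n) {u v : CNode n}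
    (h : cEdge x (rho n i) u v) : canon x i u = canon x i v := by
  rcases h with ⟨p, q, hpq, hu, hv⟩ | ⟨p, q, hpq, hu, hv⟩
  · subst hu hv
    rcases p with a | a <;> rcases q with b | b
    · exact absurd hpq (hx a b).1
    · simp [canon, eLM, hpq]
    · have h2 := x.symm _ _ hpq
      simp [canon, eLM, h2]
    · exact absurd hpq (hx a b).2
  · subst hu hv
    rcases p with a | a <;> rcases q with b | b <;>
        first
          | (rw [rho_pair_inl] at hpq; split_ifs at hpq with hai <;>
              simp_all [eMR, canon])
          | (rw [rho_pair_inr] at hpq; split_ifs at hpq with hai <;>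
              simp_all [eMR, canon])

private lemma canon_conn (x : Diagram n) (hx : IsRook x) (i : Fin n) {u v : CNode n}
    (h : cConn x (rho n i) u v) : canon x i u = canon x i v :=
  eqvGen_congr _ (fun a b hab => canon_edge x hx i hab) h

private lemma concatEq_addEdge : ConcatEq (addEdge d hd i j hi hj) (rho n i) d := by
  set x := addEdge d hd i j hi hj with hx
  have hxr : IsRook x := isRook_addEdge d hd i j hi hj
  have estep : ∀ a b : Fin n, d.pair (Sum.inl a) = some (Sum.inr b) →
      cConn x (rho n i) (eB (Sum.inl a)) (eB (Sum.inr b)) := by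
    intro a b hab
    have hbi : b ≠ i := by
      intro e; subst e
      have h2 := d.symm _ _ hab
      rw [hi] at h2; cases h2
    have haj : a ≠ j := by
      intro e; subst e
      rw [hj] at hab; cases hab
    have hxp : x.pair (Sum.inl a) = some (Sum.inr b) := by
      rw [hx, addEdge_pair_inl, if_neg haj]; exact hab
    have e1 : cEdge x (rho n i) (eB (Sum.inl a)) (Sum.inr (Sum.inl b)) :=
      Or.inl ⟨Sum.inl a, Sum.inr b, hxp, rfl, rfl⟩
    have e2 : cEdge x (rho n i) (Sum.inr (Sum.inl b)) (eB (Sum.inr b)) :=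
      Or.inr ⟨Sum.inl b, Sum.inr b, by rw [rho_pair_inl, if_neg hbi], rfl, rfl⟩
    exact Relation.EqvGen.trans _ _ _ (Relation.EqvGen.rel _ _ e1)
      (Relation.EqvGen.rel _ _ e2)
  -- extraction: from `canon` values back to edges of `d`
  have extract : ∀ a b : Fin n, b ≠ i → canon x i (Sum.inl a) = Sum.inr (Sum.inl b) →
      d.pair (Sum.inl a) = some (Sum.inr b) := by
    intro a b hbi hab
    rcases hp : x.pair (Sum.inl a) with _ | (c | c) <;>
      simp [canon, hp] at hab
    subst hab
    rw [hx, addEdge_pair_inl] at hp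
    split_ifs at hp with haj
    · simp only [Option.some.injEq, Sum.inr.injEq] at hp
      exact absurd hp.symm hbi
    · exact hp
  intro u v
  constructor
  · intro huv
    refine ⟨fun e => d.irrefl u (e ▸ huv), ?_⟩
    rcases u with a | a <;> rcases v with b | b
    · exact absurd huv (hd a b).1
    · exact estep a b huv
    · exact Relation.EqvGen.symm _ _ (estep b a (d.symm _ _ huv))
    · exact absurd huv (hd a b).2
  · rintro ⟨hne, hconn⟩
    have key := canon_conn x hxr i hconn
    rcases u with a | a <;> rcases v with b | b
    · -- both left: impossible
      exfalso
      rcases hpa : x.pair (Sum.inl a) with _ | (c | c) <;>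
        rcases hpb : x.pair (Sum.inl b) with _ | (c' | c') <;>
        simp [canon, eB, hpa, hpb] at key
      all_goals try exact hne (congrArg Sum.inl key)
      subst key
      have h1 := x.symm _ _ hpa
      have h2 := x.symm _ _ hpb
      rw [h1] at h2
      simp only [Option.some.injEq, Sum.inl.injEq] at h2
      exact hne (congrArg Sum.inl h2)
    · -- left-right
      by_cases hbi : b = i
      · exfalso
        subst hbi
        rcases hpa : x.pair (Sum.inl a) with _ | (c | c) <;>
          simp [canon, eB, hpa] at key
      · have hcan : canon x i (Sum.inl a) = Sum.inr (Sum.inl b) := by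
          rw [show canon x i (eB (Sum.inl a)) = canon x i (Sum.inl a) from rfl] at key
          rw [key]
          simp [canon, eB, hbi]
        exact extract a b hbi hcan
    · -- right-left
      by_cases hai : a = i
      · exfalso
        subst hai
        rcases hpb : x.pair (Sum.inl b) with _ | (c | c) <;>
          simp [canon, eB, hpb] at key
      · have hcan : canon x i (Sum.inl b) = Sum.inr (Sum.inl a) := by
          rw [show canon x i (eB (Sum.inl b)) = canon x i (Sum.inl b) from rfl] at key
          rw [← key]
          simp [canon, eB, hai]
        exact d.symm _ _ (extract b a hai hcan)
    · -- both right: impossible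
      exfalso
      have key' : (if a = i then (Sum.inr (Sum.inr a) : CNode n) else Sum.inr (Sum.inl a))
          = (if b = i then (Sum.inr (Sum.inr b) : CNode n) else Sum.inr (Sum.inl b)) := key
      split_ifs at key' with h1 h2 h2
      · exact hne (congrArg Sum.inr (h1.trans h2.symm))
      · simp at key'
      · simp at key'
      · simp only [Sum.inr.injEq, Sum.inl.injEq] at key'
        exact hne (congrArg Sum.inr key')

private lemma not_midIsolated (a : Fin n) :
    ¬ midIsolated (addEdge d hd i j hi hj) (rho n i) a := by
  intro hiso
  by_cases hai : a = i
  · refine hiso (Sum.inl j) ?_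
    have e1 : cEdge (addEdge d hd i j hi hj) (rho n i) (eB (Sum.inl j)) (mid i) :=
      Or.inl ⟨Sum.inl j, Sum.inr i, by rw [addEdge_pair_inl, if_pos rfl], rfl, rfl⟩
    rw [hai]
    exact Relation.EqvGen.rel _ _ e1
  · exact hiso (Sum.inr a) (Relation.EqvGen.rel _ _
      (Or.inr ⟨Sum.inr a, Sum.inl a, by rw [rho_pair_inr, if_neg hai], rfl, rfl⟩))

private lemma loopCount_addEdge : loopCount (addEdge d hd i j hi hj) (rho n i) = 0 := by
  have he : IsEmpty {a : Fin n // isLoopNode (addEdge d hd i j hi hj) (rho n i) a} :=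
    ⟨fun a => not_midIsolated d hd i j hi hj a.1 a.2.1⟩
  haveI : IsEmpty (Quot fun a b : {a : Fin n //
      isLoopNode (addEdge d hd i j hi hj) (rho n i) a} =>
      cConn (addEdge d hd i j hi hj) (rho n i) (mid a.1) (mid b.1)) :=
    ⟨fun q => Quot.ind (β := fun _ => False) (fun a => (he.false a).elim) q⟩
  exact Nat.card_of_isEmpty

private lemma freeCount_addEdge : freeCount (addEdge d hd i j hi hj) (rho n i) = 0 := by
  have he : IsEmpty {a : Fin n // isFreeNode (addEdge d hd i j hi hj) (rho n i) a} :=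
    ⟨fun a => not_midIsolated d hd i j hi hj a.1 a.2.1⟩
  haveI : IsEmpty (Quot fun a b : {a : Fin n //
      isFreeNode (addEdge d hd i j hi hj) (rho n i) a} =>
      cConn (addEdge d hd i j hi hj) (rho n i) (mid a.1) (mid b.1)) :=
    ⟨fun q => Quot.ind (β := fun _ => False) (fun a => (he.false a).elim) q⟩
  exact Nat.card_of_isEmpty

end Aux

open Diagram in
/-- In the rook algebra `R_n(ε)`, the left ideal `R_n(ε)·ρ_i` has `R`-basis
consisting of exactly those rook diagrams in which the `i`-th node on the right
is not connected to any node on the left: as sets, the left ideal generated by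
`ρ_i` coincides with the `R`-span of those (R-linearly independent) basis
diagrams. -/
theorem ideal_rho_basis (R A : Type) [CommRing R] [Ring A] [Algebra R A]
    (n : ℕ) (δ ε : R) (h : IsDiagramAlgebra R n δ ε IsRook A) (i : Fin n) :
    ((Ideal.span {h.basis ⟨rho n i, isRook_rho n i⟩} : Ideal A) : Set A) =
      (Submodule.span R {x : A | ∃ d : {d : Diagram n // IsRook d},
        d.1.pair (Sum.inr i) = none ∧ x = h.basis d} : Set A) := by
  have hS := {x : A | ∃ d : {d : Diagram n // IsRook d},
    d.1.pair (Sum.inr i) = none ∧ x = h.basis d}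
  apply subset_antisymm
  · intro x hx
    obtain ⟨a, ha⟩ := Submodule.mem_span_singleton.mp hx
    rw [← ha, smul_eq_mul]
    show a * h.basis ⟨rho n i, isRook_rho n i⟩ ∈ Submodule.span R _
    have htop : a ∈ Submodule.span R (Set.range h.basis) := by
      rw [h.basis.span_eq]; trivial
    refine Submodule.span_induction ?_ ?_ ?_ ?_ htop
    · rintro _ ⟨dd, rfl⟩
      obtain ⟨z, hz⟩ := h.concat_exists dd ⟨rho n i, isRook_rho n i⟩
      have hzr : IsRook z := h.concat_mem dd ⟨rho n i, isRook_rho n i⟩ z hz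
      rw [h.basis_mul dd ⟨rho n i, isRook_rho n i⟩ ⟨z, hzr⟩ hz]
      exact Submodule.smul_mem _ _ (Submodule.subset_span
        ⟨⟨z, hzr⟩, pair_inr_eq_none_of_concat dd.1 z i hz, rfl⟩)
    · rw [zero_mul]; exact Submodule.zero_mem _
    · intro y z _ _ hy hz
      rw [add_mul]; exact Submodule.add_mem _ hy hz
    · intro r y _ hy
      rw [smul_mul_assoc]; exact Submodule.smul_mem _ _ hy
  · intro x hx
    have hle : Submodule.span R {x : A | ∃ d : {d : Diagram n // IsRook d},
        d.1.pair (Sum.inr i) = none ∧ x = h.basis d} ≤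
        Submodule.restrictScalars R (Ideal.span {h.basis ⟨rho n i, isRook_rho n i⟩}) := by
      rw [Submodule.span_le]
      rintro _ ⟨dd, hdi, rfl⟩
      show h.basis dd ∈ Ideal.span {h.basis ⟨rho n i, isRook_rho n i⟩}
      obtain ⟨j, hjv⟩ := exists_vacant_left dd.1 dd.2 i hdi
      have hmul := h.basis_mul ⟨addEdge dd.1 dd.2 i j hdi hjv,
        isRook_addEdge dd.1 dd.2 i j hdi hjv⟩ ⟨rho n i, isRook_rho n i⟩ dd
        (concatEq_addEdge dd.1 dd.2 i j hdi hjv)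
      rw [loopCount_addEdge, freeCount_addEdge, pow_zero, pow_zero, one_mul,
        one_smul] at hmul
      exact Submodule.mem_span_singleton.mpr
        ⟨h.basis ⟨addEdge dd.1 dd.2 i j hdi hjv, isRook_addEdge dd.1 dd.2 i j hdi hjv⟩,
          by rw [smul_eq_mul]; exact hmul⟩
    exact hle hx
end

section
/- In the Brauer algebra Br_n(δ), let p be a link state with i defects and no missing edges, and let d_p be the diagram whose left and right link states both equal p with all edges horizontal. Then for every element y of Br_n(δ) lying in the left ideal J_p, one has y·d_p = δ^{(n−i)/2}·y. In particular d_p² = δ^{(n−i)/2} d_p, so if δ is invertible then δ^{−(n−i)/2} d_p is an idempotent. -/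
open MulOpposite

open Diagram

/-- A link state on `n` nodes: each node may be connected to at most one other
node, and an unconnected node may carry a hanging edge (a *defect*).  A node
with neither a connection nor a defect has a *missing edge*. -/
structure LinkState (n : ℕ) : Type where
  conn : Fin n → Option (Fin n)
  defect : Fin n → Prop
  symm : ∀ a b, conn a = some b → conn b = some a
  irrefl : ∀ a, conn a ≠ some a
  not_both : ∀ a, defect a → conn a = none

namespace LinkState

variable {n : ℕ}

private lemma bind_eq_some (d : Diagram n) (a b : Fin n) :
    (d.pair (Sum.inr a)).bind (Sum.elim (fun _ => none) some) = some b ↔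
      d.pair (Sum.inr a) = some (Sum.inr b) := by
  rcases h : d.pair (Sum.inr a) with _ | (c | c) <;> simp

/-- The right link state of a diagram, obtained by slicing the diagram
vertically down the middle: right-to-right connections become connections, and
left-to-right connections become defects. -/
def rightLS (d : Diagram n) : LinkState n where
  conn a := (d.pair (Sum.inr a)).bind (Sum.elim (fun _ => none) some)
  defect a := ∃ b, d.pair (Sum.inr a) = some (Sum.inl b)
  symm a b hab := by
    rw [bind_eq_some] at hab
    rw [bind_eq_some]
    exact d.symm _ _ hab
  irrefl a h := by
    rw [bind_eq_some] at h
    exact d.irrefl _ h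
  not_both a h := by
    obtain ⟨b, hb⟩ := h
    simp [hb]

/-- `MirrorOf p d` says that `d` is the diagram whose left and right link
states are both `p`, and all of whose left-to-right edges are horizontal:
its left-to-left and right-to-right connections are exactly the connections of
`p`, and it has a horizontal left-to-right edge at each defect of `p`. -/
def MirrorOf (p : LinkState n) (d : Diagram n) : Prop :=
  (∀ a b : Fin n, d.pair (Sum.inl a) = some (Sum.inl b) ↔ p.conn a = some b) ∧
  (∀ a b : Fin n, d.pair (Sum.inr a) = some (Sum.inr b) ↔ p.conn a = some b) ∧
  (∀ a b : Fin n, d.pair (Sum.inl a) = some (Sum.inr b) ↔ (a = b ∧ p.defect a)) ∧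
  (∀ a b : Fin n, d.pair (Sum.inr a) = some (Sum.inl b) ↔ (a = b ∧ p.defect a))

/-- `q` is obtained from `p` by a *splice*: connecting two defects of `p` to
form an edge. -/
def SpliceStep (p q : LinkState n) : Prop :=
  ∃ a b : Fin n, a ≠ b ∧ p.defect a ∧ p.defect b ∧
    q.conn a = some b ∧ q.conn b = some a ∧ ¬ q.defect a ∧ ¬ q.defect b ∧
    ∀ c, c ≠ a → c ≠ b → (q.conn c = p.conn c ∧ (q.defect c ↔ p.defect c))

/-- `q` is obtained from `p` by a *deletion*: deleting a defect of `p`,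
leaving a missing edge. -/
def DeleteStep (p q : LinkState n) : Prop :=
  ∃ a : Fin n, p.defect a ∧ ¬ q.defect a ∧ q.conn a = none ∧
    ∀ c, c ≠ a → (q.conn c = p.conn c ∧ (q.defect c ↔ p.defect c))

/-- `Reach p q` says that `q` is obtained from `p` by a (possibly empty)
sequence of splices and deletions. -/
def Reach : LinkState n → LinkState n → Prop :=
  Relation.ReflTransGen (fun p q => SpliceStep p q ∨ DeleteStep p q)

/-- The number of defects of a link state. -/
noncomputable def defectCount (p : LinkState n) : ℕ :=
  Nat.card {a : Fin n // p.defect a}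

/-- A link state with no missing edges. -/
def NoMissing (p : LinkState n) : Prop :=
  ∀ a, p.conn a = none → p.defect a

end LinkState

namespace BrauerAux

open Diagram LinkState

variable {n : ℕ}

/-- Invariant along a `Reach` sequence. -/
structure Inv (p q : LinkState n) : Prop where
  connLe : ∀ a b, p.conn a = some b → q.conn a = some b
  defLe : ∀ a, q.defect a → p.defect a
  connCases : ∀ a b, q.conn a = some b → p.conn a = some b ∨ (p.defect a ∧ p.defect b)
  defCases : ∀ a, p.defect a → q.defect a ∨ (∃ b, q.conn a = some b ∧ p.defect b) ∨
    (q.conn a = none ∧ ¬ q.defect a)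

lemma inv_refl (p : LinkState n) : Inv p p where
  connLe := fun _ _ h => h
  defLe := fun _ h => h
  connCases := fun _ _ h => Or.inl h
  defCases := fun _ h => Or.inl h

lemma inv_splice {p q q' : LinkState n} (h : Inv p q) (hs : SpliceStep q q') : Inv p q' := by
  obtain ⟨a, b, hab, hda, hdb, hca, hcb, hnda, hndb, hrest⟩ := hs
  have hpa : p.defect a := h.defLe a hda
  have hpb : p.defect b := h.defLe b hdb
  have hqa : q.conn a = none := q.not_both a hda
  have hqb : q.conn b = none := q.not_both b hdb
  constructor
  · intro c d hcd
    have hq := h.connLe c d hcd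
    have hc : c ≠ a := by rintro rfl; rw [hqa] at hq; exact nomatch hq
    have hc' : c ≠ b := by rintro rfl; rw [hqb] at hq; exact nomatch hq
    rw [(hrest c hc hc').1]; exact hq
  · intro c hc
    rcases eq_or_ne c a with rfl | hca'
    · exact absurd hc hnda
    rcases eq_or_ne c b with rfl | hcb'
    · exact absurd hc hndb
    · exact h.defLe c (((hrest c hca' hcb').2).mp hc)
  · intro c d hcd
    rcases eq_or_ne c a with rfl | hca'
    · rw [hca] at hcd
      exact Or.inr ⟨hpa, (Option.some.injEq _ _ ▸ hcd : b = d) ▸ hpb⟩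
    rcases eq_or_ne c b with rfl | hcb'
    · rw [hcb] at hcd
      exact Or.inr ⟨hpb, (Option.some.injEq _ _ ▸ hcd : a = d) ▸ hpa⟩
    · rw [(hrest c hca' hcb').1] at hcd
      exact h.connCases c d hcd
  · intro c hc
    rcases h.defCases c hc with hd | ⟨d, hd, hpd⟩ | ⟨hmc, hmd⟩
    · rcases eq_or_ne c a with rfl | hca'
      · exact Or.inr (Or.inl ⟨b, hca, hpb⟩)
      rcases eq_or_ne c b with rfl | hcb'
      · exact Or.inr (Or.inl ⟨a, hcb, hpa⟩)
      · exact Or.inl (((hrest c hca' hcb').2).mpr hd)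
    · have hc1 : c ≠ a := by rintro rfl; rw [hqa] at hd; exact nomatch hd
      have hc2 : c ≠ b := by rintro rfl; rw [hqb] at hd; exact nomatch hd
      exact Or.inr (Or.inl ⟨d, (hrest c hc1 hc2).1 ▸ hd, hpd⟩)
    · have hc1 : c ≠ a := by rintro rfl; exact hmd hda
      have hc2 : c ≠ b := by rintro rfl; exact hmd hdb
      refine Or.inr (Or.inr ⟨(hrest c hc1 hc2).1 ▸ hmc, ?_⟩)
      intro hd'; exact hmd (((hrest c hc1 hc2).2).mp hd')

lemma inv_delete {p q q' : LinkState n} (h : Inv p q) (hs : DeleteStep q q') : Inv p q' := by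
  obtain ⟨a, hda, hnda, hca, hrest⟩ := hs
  have hqa : q.conn a = none := q.not_both a hda
  constructor
  · intro c d hcd
    have hq := h.connLe c d hcd
    have hc : c ≠ a := by rintro rfl; rw [hqa] at hq; exact nomatch hq
    rw [(hrest c hc).1]; exact hq
  · intro c hc
    rcases eq_or_ne c a with rfl | hc'
    · exact absurd hc hnda
    · exact h.defLe c (((hrest c hc').2).mp hc)
  · intro c d hcd
    rcases eq_or_ne c a with rfl | hc'
    · rw [hca] at hcd; exact nomatch hcd
    · rw [(hrest c hc').1] at hcd; exact h.connCases c d hcd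
  · intro c hc
    rcases h.defCases c hc with hd | ⟨d, hd, hpd⟩ | ⟨hmc, hmd⟩
    · rcases eq_or_ne c a with rfl | hc'
      · exact Or.inr (Or.inr ⟨hca, hnda⟩)
      · exact Or.inl (((hrest c hc').2).mpr hd)
    · have hc1 : c ≠ a := by rintro rfl; rw [hqa] at hd; exact nomatch hd
      exact Or.inr (Or.inl ⟨d, (hrest c hc1).1 ▸ hd, hpd⟩)
    · have hc1 : c ≠ a := by rintro rfl; exact hmd hda
      refine Or.inr (Or.inr ⟨(hrest c hc1).1 ▸ hmc, ?_⟩)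
      intro hd'; exact hmd (((hrest c hc1).2).mp hd')

lemma reach_inv {p q : LinkState n} (h : Reach p q) : Inv p q := by
  induction h with
  | refl => exact inv_refl p
  | tail _ hstep ih =>
    rcases hstep with hs | hs
    · exact inv_splice ih hs
    · exact inv_delete ih hs

lemma rightLS_conn_iff (x : Diagram n) (a b : Fin n) :
    (rightLS x).conn a = some b ↔ x.pair (Sum.inr a) = some (Sum.inr b) := by
  show (x.pair (Sum.inr a)).bind (Sum.elim (fun _ => none) some) = some b ↔ _
  rcases h : x.pair (Sum.inr a) with _ | (c | c) <;> simp

section Facts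

variable {p : LinkState n} {x dp : Diagram n}

/-- Facts about a Brauer diagram `x` whose right link state is reachable from `p`. -/
structure XFacts (p : LinkState n) (x : Diagram n) : Prop where
  brauer : IsBrauer x
  F1 : ∀ a b, p.conn a = some b → x.pair (Sum.inr a) = some (Sum.inr b)
  F2 : ∀ a c, x.pair (Sum.inr a) = some (Sum.inl c) → p.defect a
  F3 : ∀ a b, x.pair (Sum.inr a) = some (Sum.inr b) →
    p.conn a = some b ∨ (p.defect a ∧ p.defect b)
  F4 : ∀ a, p.defect a → (∃ c, x.pair (Sum.inr a) = some (Sum.inl c)) ∨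
    (∃ b, x.pair (Sum.inr a) = some (Sum.inr b) ∧ p.defect b)

lemma xfacts (hx : IsBrauer x) (hre : Reach p (rightLS x)) : XFacts p x := by
  have h := reach_inv hre
  refine ⟨hx, ?_, ?_, ?_, ?_⟩
  · intro a b hab
    exact (rightLS_conn_iff x a b).mp (h.connLe a b hab)
  · intro a c hac
    exact h.defLe a ⟨c, hac⟩
  · intro a b hab
    exact h.connCases a b ((rightLS_conn_iff x a b).mpr hab)
  · intro a ha
    rcases h.defCases a ha with hd | ⟨b, hb, hpb⟩ | ⟨hmc, hmd⟩
    · exact Or.inl hd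
    · exact Or.inr ⟨b, (rightLS_conn_iff x a b).mp hb, hpb⟩
    · exfalso
      rcases hv : x.pair (Sum.inr a) with _ | (c | c)
      · have := hx (Sum.inr a); rw [hv] at this; simp at this
      · exact hmd ⟨c, hv⟩
      · rw [(rightLS_conn_iff x a c).mpr hv] at hmc; exact nomatch hmc

/-- The partner of a node in a Brauer diagram. -/
noncomputable def xp (x : Diagram n) (hx : IsBrauer x) (u : Fin n ⊕ Fin n) : Fin n ⊕ Fin n :=
  (x.pair u).get (hx u)

lemma xp_spec (hx : IsBrauer x) (u : Fin n ⊕ Fin n) : x.pair u = some (xp x hx u) :=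
  (Option.some_get (hx u)).symm

lemma xp_eq (hx : IsBrauer x) {u v : Fin n ⊕ Fin n} (h : x.pair u = some v) :
    xp x hx u = v := by
  have := xp_spec hx u; rw [h] at this; exact (Option.some.injEq _ _ ▸ this.symm)

/-- Component label of a node of the concatenation. -/
noncomputable def cid (x : Diagram n) (hx : IsBrauer x) (p : LinkState n) :
    CNode n → Sym2 (Fin n ⊕ Fin n) × Bool
  | Sum.inl c => (s(Sum.inl c, xp x hx (Sum.inl c)), false)
  | Sum.inr (Sum.inl a) => (s(Sum.inr a, xp x hx (Sum.inr a)), (p.conn a).isSome)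
  | Sum.inr (Sum.inr a) => (s(Sum.inr a, xp x hx (Sum.inr a)), false)

lemma cid_eB (hx : IsBrauer x) (u : Fin n ⊕ Fin n) :
    cid x hx p (eB u) = (s(u, xp x hx u), false) := by
  cases u <;> rfl

lemma cid_mid (hx : IsBrauer x) (a : Fin n) :
    cid x hx p (mid a) = (s(Sum.inr a, xp x hx (Sum.inr a)), (p.conn a).isSome) := rfl

lemma not_defect_of_conn {a b : Fin n} (h : p.conn a = some b) : ¬ p.defect a :=
  fun hd => by rw [p.not_both a hd] at h; exact nomatch h

lemma cEdge_cid (hX : XFacts p x) (hdp : MirrorOf p dp) :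
    ∀ u v, cEdge x dp u v → cid x hX.brauer p u = cid x hX.brauer p v := by
  obtain ⟨M1, M2, M3, M4⟩ := hdp
  rintro u v (⟨s, t, hst, rfl, rfl⟩ | ⟨s, t, hst, rfl, rfl⟩)
  · -- x-edge
    have hts : x.pair t = some s := x.symm s t hst
    rcases s with c | a <;> rcases t with c' | b
    · -- left-left
      simp only [eLM, Sum.elim_inl, cid, xp_eq hX.brauer hst, xp_eq hX.brauer hts]
      rw [Sym2.eq_swap]
    · -- left c to mid b
      have hd : p.defect b := hX.F2 b c hts
      simp only [eLM, Sum.elim_inl, Sum.elim_inr, cid, xp_eq hX.brauer hst,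
        xp_eq hX.brauer hts, p.not_both b hd, Option.isSome_none]
      rw [Sym2.eq_swap]
    · -- mid a to left c'
      have hd : p.defect a := hX.F2 a c' hst
      simp only [eLM, Sum.elim_inl, Sum.elim_inr, cid, xp_eq hX.brauer hst,
        xp_eq hX.brauer hts, p.not_both a hd, Option.isSome_none]
      rw [Sym2.eq_swap]
    · -- mid a to mid b
      have hbools : (p.conn a).isSome = (p.conn b).isSome := by
        rcases hX.F3 a b hst with hc | ⟨hda, hdb⟩
        · rw [hc, p.symm a b hc]; rfl
        · rw [p.not_both a hda, p.not_both b hdb]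
      simp only [eLM, Sum.elim_inr, cid, xp_eq hX.brauer hst, xp_eq hX.brauer hts, hbools]
      rw [Sym2.eq_swap]
  · -- dp-edge
    rcases s with a | a <;> rcases t with b | b
    · -- mid a to mid b : p.conn a = some b
      have hc : p.conn a = some b := (M1 a b).mp hst
      have hc' : p.conn b = some a := p.symm a b hc
      have h1 : x.pair (Sum.inr a) = some (Sum.inr b) := hX.F1 a b hc
      have h2 : x.pair (Sum.inr b) = some (Sum.inr a) := hX.F1 b a hc'
      simp only [eMR, Sum.elim_inl, cid, xp_eq hX.brauer h1, xp_eq hX.brauer h2, hc, hc',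
        Option.isSome_some]
      rw [Sym2.eq_swap]
    · -- mid a to right b : a = b, defect a
      obtain ⟨rfl, hd⟩ := (M3 a b).mp hst
      simp only [eMR, Sum.elim_inl, Sum.elim_inr, cid, p.not_both a hd, Option.isSome_none]
    · -- right a to mid b : a = b, defect a
      obtain ⟨rfl, hd⟩ := (M4 a b).mp hst
      simp only [eMR, Sum.elim_inl, Sum.elim_inr, cid, p.not_both a hd, Option.isSome_none]
    · -- right a to right b : p.conn a = some b
      have hc : p.conn a = some b := (M2 a b).mp hst
      have hc' : p.conn b = some a := p.symm a b hc
      have h1 : x.pair (Sum.inr a) = some (Sum.inr b) := hX.F1 a b hc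
      have h2 : x.pair (Sum.inr b) = some (Sum.inr a) := hX.F1 b a hc'
      simp only [eMR, Sum.elim_inr, cid, xp_eq hX.brauer h1, xp_eq hX.brauer h2]
      rw [Sym2.eq_swap]

lemma cConn_cid (hX : XFacts p x) (hdp : MirrorOf p dp) :
    ∀ u v, cConn x dp u v → cid x hX.brauer p u = cid x hX.brauer p v := by
  intro u v h
  induction h with
  | rel u v h => exact cEdge_cid hX hdp u v h
  | refl u => rfl
  | symm _ _ _ ih => exact ih.symm
  | trans _ _ _ _ _ ih1 ih2 => exact ih1.trans ih2

lemma xEdge (x dp : Diagram n) {s t : Fin n ⊕ Fin n} (h : x.pair s = some t) :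
    cEdge x dp (eLM s) (eLM t) := Or.inl ⟨s, t, h, rfl, rfl⟩

lemma dEdge (x dp : Diagram n) {s t : Fin n ⊕ Fin n} (h : dp.pair s = some t) :
    cEdge x dp (eMR s) (eMR t) := Or.inr ⟨s, t, h, rfl, rfl⟩

lemma concatEq_self (hp : NoMissing p) (hdp : MirrorOf p dp) (hX : XFacts p x) :
    ConcatEq x dp x := by
  obtain ⟨M1, M2, M3, M4⟩ := hdp
  intro u v
  constructor
  · intro huv
    refine ⟨fun he => x.irrefl u (he ▸ huv), ?_⟩
    rcases u with c | a <;> rcases v with c' | b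
    · exact Relation.EqvGen.rel _ _ (xEdge x dp (s := Sum.inl c) (t := Sum.inl c') huv)
    · -- left c to right b : x.pair (inl c) = some (inr b), so p.defect b
      have hts : x.pair (Sum.inr b) = some (Sum.inl c) := x.symm _ _ huv
      have hd : p.defect b := hX.F2 b c hts
      refine Relation.EqvGen.trans _ (mid b) _
        (Relation.EqvGen.rel _ _ (xEdge x dp (s := Sum.inl c) (t := Sum.inr b) huv)) ?_
      exact Relation.EqvGen.rel _ _
        (dEdge x dp (s := Sum.inl b) (t := Sum.inr b) ((M3 b b).mpr ⟨rfl, hd⟩))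
    · -- right a to left c'
      have hd : p.defect a := hX.F2 a c' huv
      refine Relation.EqvGen.trans _ (mid a) _
        (Relation.EqvGen.rel _ _
          (dEdge x dp (s := Sum.inr a) (t := Sum.inl a) ((M4 a a).mpr ⟨rfl, hd⟩))) ?_
      exact Relation.EqvGen.rel _ _ (xEdge x dp (s := Sum.inr a) (t := Sum.inl c') huv)
    · -- right a to right b
      rcases hX.F3 a b huv with hc | ⟨hda, hdb⟩
      · exact Relation.EqvGen.rel _ _
          (dEdge x dp (s := Sum.inr a) (t := Sum.inr b) ((M2 a b).mpr hc))
      · refine Relation.EqvGen.trans _ (mid a) _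
          (Relation.EqvGen.rel _ _
            (dEdge x dp (s := Sum.inr a) (t := Sum.inl a) ((M4 a a).mpr ⟨rfl, hda⟩))) ?_
        refine Relation.EqvGen.trans _ (mid b) _
          (Relation.EqvGen.rel _ _ (xEdge x dp (s := Sum.inr a) (t := Sum.inr b) huv)) ?_
        exact Relation.EqvGen.rel _ _
          (dEdge x dp (s := Sum.inl b) (t := Sum.inr b) ((M3 b b).mpr ⟨rfl, hdb⟩))
  · rintro ⟨huv, hconn⟩
    have hcid := cConn_cid hX ⟨M1, M2, M3, M4⟩ _ _ hconn
    rw [cid_eB, cid_eB, Prod.mk.injEq] at hcid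
    rcases Sym2.eq_iff.mp hcid.1 with ⟨he, _⟩ | ⟨_, he⟩
    · exact absurd he huv
    · rw [← he]; exact xp_spec hX.brauer u

lemma midIsolated_iff (hp : NoMissing p) (hdp : MirrorOf p dp) (hX : XFacts p x) (a : Fin n) :
    midIsolated x dp a ↔ (p.conn a).isSome := by
  constructor
  · intro hiso
    by_contra hns
    have hnone : p.conn a = none := by
      rcases hv : p.conn a with _ | b
      · rfl
      · rw [hv] at hns; exact absurd rfl hns
    have hd : p.defect a := hp a hnone
    exact hiso (Sum.inr a) (Relation.EqvGen.rel _ _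
      (dEdge x dp (s := Sum.inr a) (t := Sum.inl a) ((hdp.2.2.2 a a).mpr ⟨rfl, hd⟩)))
  · intro hs u hconn
    have hcid := cConn_cid hX hdp _ _ hconn
    rw [cid_eB, cid_mid, Prod.mk.injEq] at hcid
    rw [← hcid.2] at hs
    exact Bool.noConfusion hs

lemma degTwo_always (hdpB : IsBrauer dp) (hX : XFacts p x) (b : Fin n) : degTwo x dp b := by
  constructor
  · rcases hv : x.pair (Sum.inr b) with _ | c
    · have := hX.brauer (Sum.inr b); rw [hv] at this; simp at this
    · exact ⟨c, rfl⟩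
  · rcases hv : dp.pair (Sum.inl b) with _ | c
    · have := hdpB (Sum.inl b); rw [hv] at this; simp at this
    · exact ⟨c, rfl⟩

lemma isLoopNode_iff (hp : NoMissing p) (hdpB : IsBrauer dp) (hdp : MirrorOf p dp)
    (hX : XFacts p x) (a : Fin n) :
    isLoopNode x dp a ↔ (p.conn a).isSome := by
  unfold isLoopNode
  rw [← midIsolated_iff hp hdp hX a]
  exact ⟨fun h => h.1, fun h => ⟨h, fun b _ => degTwo_always hdpB hX b⟩⟩

lemma freeCount_eq_zero (hdpB : IsBrauer dp) (hX : XFacts p x) : freeCount x dp = 0 := by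
  have hempty : IsEmpty {a : Fin n // isFreeNode x dp a} := by
    refine ⟨fun a => ?_⟩
    exact a.2.2 (fun b _ => degTwo_always hdpB hX b)
  have : IsEmpty (Quot (fun a b : {a : Fin n // isFreeNode x dp a} =>
      cConn x dp (mid a.1) (mid b.1))) :=
    ⟨fun q => Quot.ind (β := fun _ => False) (fun a => hempty.false a) q⟩
  exact Nat.card_of_isEmpty

/-- The pairing relation on nodes with a connection. -/
def pRel (p : LinkState n) (a b : {a : Fin n // (p.conn a).isSome}) : Prop :=
  a.1 = b.1 ∨ p.conn a.1 = some b.1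

lemma pRel_equivalence (p : LinkState n) : Equivalence (pRel p) := by
  constructor
  · intro a; exact Or.inl rfl
  · rintro a b (h | h)
    · exact Or.inl h.symm
    · exact Or.inr (p.symm _ _ h)
  · rintro a b c (h | h) (h' | h')
    · exact Or.inl (h.trans h')
    · exact Or.inr (by rw [h]; exact h')
    · exact Or.inr (by rw [← h']; exact h)
    · have := p.symm _ _ h
      rw [h'] at this
      exact Or.inl (Option.some.injEq _ _ ▸ this).symm

lemma cConn_mid_iff (hp : NoMissing p) (hdp : MirrorOf p dp) (hX : XFacts p x)
    (a b : Fin n) (ha : (p.conn a).isSome) :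
    cConn x dp (mid a) (mid b) ↔ (a = b ∨ p.conn a = some b) := by
  constructor
  · intro hconn
    have hcid := cConn_cid hX hdp _ _ hconn
    rw [cid_mid, cid_mid, Prod.mk.injEq] at hcid
    rcases Sym2.eq_iff.mp hcid.1 with ⟨he, _⟩ | ⟨_, he⟩
    · exact Or.inl (Sum.inr.injEq _ _ ▸ he)
    · obtain ⟨c, hc⟩ := Option.isSome_iff_exists.mp ha
      have h1 : x.pair (Sum.inr a) = some (Sum.inr c) := hX.F1 a c hc
      have := xp_eq hX.brauer h1
      rw [this] at he
      exact Or.inr ((Sum.inr.injEq _ _ ▸ he : c = b) ▸ hc)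
  · rintro (rfl | hc)
    · exact Relation.EqvGen.refl _
    · exact Relation.EqvGen.rel _ _
        (dEdge x dp (s := Sum.inl a) (t := Sum.inl b) ((hdp.1 a b).mpr hc))

/-- The partner map on connected nodes. -/
noncomputable def pt (p : LinkState n) (a : {a : Fin n // (p.conn a).isSome}) :
    {a : Fin n // (p.conn a).isSome} :=
  ⟨(p.conn a.1).get a.2, by rw [p.symm a.1 _ (Option.some_get a.2).symm]; rfl⟩

lemma conn_pt (p : LinkState n) (a : {a : Fin n // (p.conn a).isSome}) :
    p.conn a.1 = some (pt p a).1 := (Option.some_get a.2).symm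

lemma pt_ne (p : LinkState n) (a : {a : Fin n // (p.conn a).isSome}) : (pt p a).1 ≠ a.1 :=
  fun h => p.irrefl a.1 (h ▸ conn_pt p a)

lemma card_conn_eq (p : LinkState n) :
    Nat.card {a : Fin n // (p.conn a).isSome} = 2 * Nat.card (Quot (pRel p)) := by
  classical
  have hqeq : ∀ a b : {a : Fin n // (p.conn a).isSome},
      Quot.mk (pRel p) a = Quot.mk (pRel p) b ↔ pRel p a b := by
    intro a b
    rw [Quot.eq]
    exact (pRel_equivalence p).eqvGen_iff
  let f : {a : Fin n // (p.conn a).isSome} → Quot (pRel p) × Bool :=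
    fun a => (Quot.mk _ a, decide (a.1 < (pt p a).1))
  have hbij : Function.Bijective f := by
    constructor
    · intro a b hab
      rw [Prod.mk.injEq] at hab
      rcases (hqeq a b).mp hab.1 with he | he
      · exact Subtype.ext he
      · have hpa : (pt p a).1 = b.1 := by
          have := conn_pt p a; rw [he] at this; exact (Option.some_inj.mp this).symm
        have hpb : (pt p b).1 = a.1 := by
          have := conn_pt p b
          rw [p.symm _ _ he] at this
          exact (Option.some_inj.mp this).symm
        have h2 := hab.2
        rw [hpa, hpb, decide_eq_decide] at h2
        exact Subtype.ext (le_antisymm (le_of_not_gt (fun hlt => by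
            have := h2.mpr hlt; exact absurd this (lt_asymm hlt)))
          (le_of_not_gt (fun hlt => by
            have := h2.mp hlt; exact absurd this (lt_asymm hlt))))
    · rintro ⟨c, bb⟩
      obtain ⟨a, rfl⟩ := Quot.exists_rep c
      have hmk : Quot.mk (pRel p) (pt p a) = Quot.mk (pRel p) a :=
        (hqeq _ _).mpr (Or.inr (p.symm _ _ (conn_pt p a)))
      have hptpt : (pt p (pt p a)).1 = a.1 := by
        have := conn_pt p (pt p a)
        rw [p.symm _ _ (conn_pt p a)] at this
        exact (Option.some_inj.mp this).symm
      by_cases hlt : a.1 < (pt p a).1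
      · cases bb
        · refine ⟨pt p a, ?_⟩
          simp only [f, hmk, Prod.mk.injEq, true_and, hptpt]
          simp [not_lt_of_gt hlt]
        · exact ⟨a, by simp only [f, Prod.mk.injEq, true_and]; simp [hlt]⟩
      · have hlt' : (pt p a).1 < a.1 :=
          lt_of_le_of_ne (le_of_not_gt hlt) (pt_ne p a)
        cases bb
        · exact ⟨a, by simp only [f, Prod.mk.injEq, true_and]; simp [hlt]⟩
        · refine ⟨pt p a, ?_⟩
          simp only [f, hmk, Prod.mk.injEq, true_and, hptpt]
          simp [hlt']
  have := Nat.card_congr (Equiv.ofBijective f hbij)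
  rw [Nat.card_prod] at this
  have hb : Nat.card Bool = 2 := by
    rw [Nat.card_eq_fintype_card, Fintype.card_bool]
  rw [hb] at this
  omega

lemma loopCount_eq (hp : NoMissing p) (hdpB : IsBrauer dp) (hdp : MirrorOf p dp)
    (hX : XFacts p x) : 2 * loopCount x dp = n - defectCount p := by
  classical
  have equot : Quot (fun a b : {a : Fin n // isLoopNode x dp a} =>
      cConn x dp (mid a.1) (mid b.1)) ≃ Quot (pRel p) := by
    refine Quot.congr (Equiv.subtypeEquivRight (isLoopNode_iff hp hdpB hdp hX)) ?_
    intro a b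
    rw [cConn_mid_iff hp hdp hX a.1 b.1
      ((isLoopNode_iff hp hdpB hdp hX a.1).mp a.2)]
    simp [pRel, Equiv.subtypeEquivRight]; exact Iff.rfl
  have h1 : loopCount x dp = Nat.card (Quot (pRel p)) := Nat.card_congr equot
  have h2 := card_conn_eq p
  -- count defects as complement
  have hcompl : ∀ a : Fin n, p.defect a ↔ ¬ (p.conn a).isSome := by
    intro a
    constructor
    · intro hd
      rw [p.not_both a hd]
      simp
    · intro hns
      refine hp a ?_
      rcases hv : p.conn a with _ | b
      · rfl
      · rw [hv] at hns; simp at hns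
  have edef : {a : Fin n // p.defect a} ≃ {a : Fin n // ¬ (p.conn a).isSome} :=
    Equiv.subtypeEquivRight hcompl
  have h3 : defectCount p = Nat.card {a : Fin n // ¬ (p.conn a).isSome} :=
    Nat.card_congr edef
  have h4 : Nat.card {a : Fin n // ¬ (p.conn a).isSome} =
      n - Nat.card {a : Fin n // (p.conn a).isSome} := by
    rw [Nat.card_eq_fintype_card, Nat.card_eq_fintype_card,
      Fintype.card_subtype_compl, Fintype.card_fin]
  have h5 : Nat.card {a : Fin n // (p.conn a).isSome} ≤ n := by
    rw [Nat.card_eq_fintype_card]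
    have := Fintype.card_subtype_le (fun a : Fin n => (p.conn a).isSome)
    simpa using this
  rw [loopCount, h1, defectCount] at *
  omega

lemma linkState_ext {p q : LinkState n} (hc : ∀ a, p.conn a = q.conn a)
    (hd : ∀ a, p.defect a ↔ q.defect a) : p = q := by
  cases p; cases q
  simp only [LinkState.mk.injEq]
  exact ⟨funext hc, funext fun a => propext (hd a)⟩

lemma rightLS_mirror (hp : NoMissing p) (hdp : MirrorOf p dp) :
    rightLS dp = p := by
  obtain ⟨M1, M2, M3, M4⟩ := hdp
  refine linkState_ext ?_ ?_
  · intro a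
    rcases hv : p.conn a with _ | b
    · have hd := hp a hv
      have hpr := (M4 a a).mpr ⟨rfl, hd⟩
      show (dp.pair (Sum.inr a)).bind _ = none
      rw [hpr]; rfl
    · have hpr := (M2 a b).mpr hv
      show (dp.pair (Sum.inr a)).bind _ = some b
      rw [hpr]; rfl
  · intro a
    show (∃ b, dp.pair (Sum.inr a) = some (Sum.inl b)) ↔ p.defect a
    constructor
    · rintro ⟨b, hb⟩
      exact ((M4 a b).mp hb).2
    · intro hd
      exact ⟨a, (M4 a a).mpr ⟨rfl, hd⟩⟩

end Facts

end BrauerAux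

open Diagram LinkState in
/-- In the Brauer algebra `Br_n(δ)`, let `p` be a link state with `i` defects and
no missing edges, and let `d_p` be the diagram whose left and right link states
both equal `p` with all edges horizontal.  Then for every element `y` of
`Br_n(δ)` lying in the left ideal `J_p` (the span of the diagrams whose right
link state is obtained from `p` by a sequence of splices and deletions), one has
`y·d_p = δ^{(n−i)/2}·y`.  In particular `d_p² = δ^{(n−i)/2} d_p`, so if `δ` is
invertible then `δ^{−(n−i)/2} d_p` is an idempotent. -/
theorem mirror_diagram_eigenvalue (R A : Type) [CommRing R] [Ring A] [Algebra R A]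
    (n : ℕ) (δ ε : R) (h : IsDiagramAlgebra R n δ ε IsBrauer A)
    (p : LinkState n) (hp : NoMissing p)
    (dp : {d : Diagram n // IsBrauer d}) (hdp : MirrorOf p dp.1) :
    (∀ y ∈ Submodule.span R {x : A | ∃ d : {d : Diagram n // IsBrauer d},
        Reach p (rightLS d.1) ∧ x = h.basis d},
      y * h.basis dp = δ ^ ((n - defectCount p) / 2) • y) ∧
    h.basis dp * h.basis dp = δ ^ ((n - defectCount p) / 2) • h.basis dp ∧
    (∀ b : R, b * δ = 1 →
      (b ^ ((n - defectCount p) / 2) • h.basis dp) *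
        (b ^ ((n - defectCount p) / 2) • h.basis dp) =
        b ^ ((n - defectCount p) / 2) • h.basis dp) := by
  classical
  set k := (n - defectCount p) / 2 with hk
  have main : ∀ d : {d : Diagram n // IsBrauer d}, Reach p (rightLS d.1) →
      h.basis d * h.basis dp = δ ^ k • h.basis d := by
    intro d hre
    have hX := BrauerAux.xfacts d.2 hre
    have hC := BrauerAux.concatEq_self hp hdp hX
    have hmul := h.basis_mul d dp d hC
    rw [hmul, BrauerAux.freeCount_eq_zero dp.2 hX, pow_zero, mul_one]
    have h2 := BrauerAux.loopCount_eq hp dp.2 hdp hX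
    have h3 : loopCount d.1 dp.1 = k := by omega
    rw [h3]
  have spanp : ∀ y ∈ Submodule.span R {x : A | ∃ d : {d : Diagram n // IsBrauer d},
      Reach p (rightLS d.1) ∧ x = h.basis d}, y * h.basis dp = δ ^ k • y := by
    intro y hy
    induction hy using Submodule.span_induction with
    | mem z hz => obtain ⟨d, hre, rfl⟩ := hz; exact main d hre
    | zero => simp
    | add y z _ _ ihy ihz => rw [add_mul, ihy, ihz, smul_add]
    | smul r y _ ih => rw [smul_mul_assoc, ih, smul_smul, mul_comm, ← smul_smul]
  have hdpmem : h.basis dp ∈ Submodule.span R {x : A | ∃ d : {d : Diagram n // IsBrauer d},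
      Reach p (rightLS d.1) ∧ x = h.basis d} :=
    Submodule.subset_span ⟨dp, by
      rw [BrauerAux.rightLS_mirror hp hdp]; exact Relation.ReflTransGen.refl, rfl⟩
  have hsq := spanp _ hdpmem
  refine ⟨spanp, hsq, ?_⟩
  intro b hb
  rw [smul_mul_assoc, mul_smul_comm, hsq, smul_smul, smul_smul]
  have hscal : b ^ k * b ^ k * δ ^ k = b ^ k := by
    rw [mul_assoc, ← mul_pow, hb, one_pow, mul_one]
  rw [hscal]
end
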